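/- arXiv:0712.0585 — 6 statements merged into one kernel-verified Lean document; each statement's English description precedes it below -/
import Mathlib

section
/- The group of 2-cocycles on A = (ℤ/pℤ) × (ℤ/pℤ) with values in kˣ (under pointwise multiplication) modulo the subgroup of coboundaries is isomorphic, as a group, to ℤ/pℤ; i.e., H²((ℤ/pℤ)², kˣ) ≅ ℤ/pℤ. -/
section Raw

variable {A : Type*} [AddCommGroup A] {k : Type*} [Field k]

/-- The antisymmetrization pairing of a 2-cochain. -/
def cocPair (μ : A → A → kˣ) (a b : A) : kˣ := μ a b * (μ b a)⁻¹

variable {μ : A → A → kˣ}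
  (hμ : ∀ a b c : A, μ a b * μ (a + b) c = μ b c * μ a (b + c))

include hμ

lemma coc_zero_right (a : A) : μ a 0 = μ 0 0 := by
  have h := hμ a 0 0
  simp only [add_zero] at h
  exact mul_right_cancel h

lemma coc_zero_left (b : A) : μ 0 b = μ 0 0 := by
  have h := hμ 0 0 b
  simp only [zero_add] at h
  exact (mul_right_cancel h).symm

lemma cocPair_zero_left (b : A) : cocPair μ 0 b = 1 := by
  unfold cocPair
  rw [coc_zero_left hμ b, coc_zero_right hμ b, mul_inv_cancel]

lemma cocPair_add_left (a b c : A) :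
    cocPair μ (a + b) c = cocPair μ a c * cocPair μ b c := by
  have key : μ (a+b) c * μ c a * μ c b = μ a c * μ b c * μ c (a+b) := by
    apply mul_right_cancel (b := μ a b * μ (c+a) b)
    have h1 := congrArg Units.val (hμ a b c)
    have h2 := congrArg Units.val (hμ c a b)
    have h3 := congrArg Units.val (hμ a c b)
    rw [add_comm a c, add_comm c b] at h3
    apply Units.ext
    simp only [Units.val_mul] at *
    linear_combination (((μ c a : k)) * (μ (c+a) b : k) * (μ c b : k)) * h1
      + ((μ b c : k) * (μ a (b+c) : k) * (μ c b : k)) * h2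
      - ((μ a b : k) * (μ b c : k) * (μ c (a+b) : k)) * h3
  unfold cocPair
  apply mul_right_cancel (b := μ c (a+b) * μ c a * μ c b)
  apply Units.ext
  have hk := congrArg Units.val key
  simp only [Units.val_mul, Units.val_inv_eq_inv_val] at *
  field_simp
  linear_combination hk

lemma cocPair_inv (a b : A) : cocPair μ a b = (cocPair μ b a)⁻¹ := by
  unfold cocPair
  rw [mul_inv, inv_inv, mul_comm]

lemma cocPair_self (a : A) : cocPair μ a a = 1 := mul_inv_cancel _

lemma cocPair_add_right (a b c : A) :
    cocPair μ a (b + c) = cocPair μ a b * cocPair μ a c := by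
  rw [cocPair_inv hμ, cocPair_add_left hμ, mul_inv, ← cocPair_inv hμ, ← cocPair_inv hμ]

lemma cocPair_nsmul_left (n : ℕ) (a b : A) :
    cocPair μ (n • a) b = cocPair μ a b ^ n := by
  induction n with
  | zero => simp [cocPair_zero_left hμ]
  | succ m ih => rw [succ_nsmul, cocPair_add_left hμ, ih, pow_succ]

lemma cocPair_nsmul_right (n : ℕ) (a b : A) :
    cocPair μ a (n • b) = cocPair μ a b ^ n := by
  rw [cocPair_inv hμ, cocPair_nsmul_left hμ, ← inv_pow, ← cocPair_inv hμ]

end Raw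

/-- A symmetric 2-cocycle, bundled. -/
structure SymCocycle (A : Type*) [AddCommGroup A] (k : Type*) [Field k] where
  μ : A → A → kˣ
  coc : ∀ a b c : A, μ a b * μ (a + b) c = μ b c * μ a (b + c)
  symm : ∀ a b : A, μ a b = μ b a

namespace SymCocycle

variable {A : Type*} [AddCommGroup A] {k : Type*} [Field k]

/-- The central extension of `A` by `kˣ` determined by a symmetric cocycle. -/
@[ext]
structure Ext (c : SymCocycle A k) where
  u : kˣ
  t : A

variable {c : SymCocycle A k}

def emul (x y : Ext c) : Ext c := ⟨x.u * y.u * c.μ x.t y.t, x.t + y.t⟩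
def eone (c : SymCocycle A k) : Ext c := ⟨(c.μ 0 0)⁻¹, 0⟩
def einv (x : Ext c) : Ext c := ⟨x.u⁻¹ * (c.μ 0 0)⁻¹ * (c.μ x.t (-x.t))⁻¹, -x.t⟩

instance : CommGroup (Ext c) where
  mul := emul
  one := eone c
  inv := einv
  mul_assoc x y z := by
    show emul (emul x y) z = emul x (emul y z)
    have h := congrArg Units.val (c.coc x.t y.t z.t)
    refine Ext.ext (Units.ext ?_) (add_assoc _ _ _)
    simp only [emul, Units.val_mul] at *
    linear_combination ((x.u : k) * (y.u : k) * (z.u : k)) * h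
  one_mul y := by
    show emul (eone c) y = y
    refine Ext.ext (Units.ext ?_) (zero_add _)
    simp only [emul, eone]
    rw [coc_zero_left c.coc]
    simp only [Units.val_mul, Units.val_inv_eq_inv_val]
    field_simp
    exact congrArg Units.val (coc_zero_left c.coc y.t)
  mul_one y := by
    show emul y (eone c) = y
    refine Ext.ext (Units.ext ?_) (add_zero _)
    simp only [emul, eone]
    rw [coc_zero_right c.coc]
    simp only [Units.val_mul, Units.val_inv_eq_inv_val]
    field_simp
    exact congrArg Units.val (coc_zero_right c.coc y.t)
  inv_mul_cancel x := by
    show emul (einv x) x = eone c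
    refine Ext.ext (Units.ext ?_) (neg_add_cancel _)
    simp only [emul, einv, eone]
    rw [c.symm (-x.t) x.t]
    simp only [Units.val_mul, Units.val_inv_eq_inv_val]
    field_simp
  mul_comm x y := by
    show emul x y = emul y x
    refine Ext.ext (Units.ext ?_) (add_comm _ _)
    simp only [emul]
    rw [c.symm y.t x.t]
    simp only [Units.val_mul]
    ring

@[simp] lemma mul_u (x y : Ext c) : (x * y).u = x.u * y.u * c.μ x.t y.t := rfl
@[simp] lemma mul_t (x y : Ext c) : (x * y).t = x.t + y.t := rfl
@[simp] lemma one_u : (1 : Ext c).u = (c.μ 0 0)⁻¹ := rfl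
@[simp] lemma one_t : (1 : Ext c).t = 0 := rfl

/-- The central embedding `kˣ →* Ext c`. -/
def iota (c : SymCocycle A k) : kˣ →* Ext c where
  toFun x := ⟨x * (c.μ 0 0)⁻¹, 0⟩
  map_one' := by
    show (⟨1 * (c.μ 0 0)⁻¹, 0⟩ : Ext c) = eone c
    refine Ext.ext ?_ rfl
    rw [one_mul]; rfl
  map_mul' x y := by
    show (⟨x * y * (c.μ 0 0)⁻¹, 0⟩ : Ext c)
        = emul ⟨x * (c.μ 0 0)⁻¹, 0⟩ ⟨y * (c.μ 0 0)⁻¹, 0⟩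
    refine Ext.ext (Units.ext ?_) (by simp [emul])
    simp only [emul, Units.val_mul, Units.val_inv_eq_inv_val]
    field_simp

@[simp] lemma iota_u (x : kˣ) : (iota c x).u = x * (c.μ 0 0)⁻¹ := rfl
@[simp] lemma iota_t (x : kˣ) : (iota c x).t = 0 := rfl

lemma t_pow (x : Ext c) (n : ℕ) : (x ^ n).t = n • x.t := by
  induction n with
  | zero => simp
  | succ m ih => rw [pow_succ, mul_t, ih, succ_nsmul]

lemma exists_pow_eq_one [IsAlgClosed k] {n : ℕ} (hn : 0 < n) (e : A) (he : n • e = 0) :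
    ∃ s : Ext c, s.t = e ∧ s ^ n = 1 := by
  set t0 : Ext c := ⟨1, e⟩ with ht0
  set C : kˣ := (t0 ^ n).u with hC
  obtain ⟨z, hz⟩ := IsAlgClosed.exists_pow_nat_eq ((((C * c.μ 0 0)⁻¹ : kˣ) : k)) hn
  have hz0 : z ≠ 0 := by
    intro h
    rw [h, zero_pow hn.ne'] at hz
    exact Units.ne_zero _ hz.symm
  set d : kˣ := Units.mk0 z hz0 with hd
  have hdn : d ^ n = (C * c.μ 0 0)⁻¹ := by
    apply Units.ext
    push_cast [hd]
    simpa using hz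
  have ht0n : t0 ^ n = iota c (C * c.μ 0 0) := by
    refine Ext.ext (Units.ext ?_) ?_
    · simp only [iota_u, Units.val_mul, Units.val_inv_eq_inv_val]
      field_simp
      rfl
    · rw [t_pow, iota_t, ht0]
      exact he
  refine ⟨iota c d * t0, by simp [ht0], ?_⟩
  rw [mul_pow, ← map_pow, hdn, ht0n, ← map_mul, inv_mul_cancel, map_one]

end SymCocycle

namespace SymCocycle

theorem coboundary {p : ℕ} [NeZero p] {k : Type*} [Field k] [IsAlgClosed k]
    (c : SymCocycle (ZMod p × ZMod p) k) :
    ∃ f : ZMod p × ZMod p → kˣ, ∀ a b, c.μ a b = f a * f b * (f (a + b))⁻¹ := by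
  have hp : 0 < p := Nat.pos_of_ne_zero (NeZero.ne p)
  have hz : ∀ y : ZMod p, p • y = 0 := fun y => by
    rw [nsmul_eq_mul, ZMod.natCast_self, zero_mul]
  have hsm : ∀ x : ZMod p × ZMod p, p • x = 0 := fun x => by
    ext <;> simp [hz]
  obtain ⟨s₁, hs₁t, hs₁⟩ := c.exists_pow_eq_one hp ((1 : ZMod p), (0 : ZMod p)) (hsm _)
  obtain ⟨s₂, hs₂t, hs₂⟩ := c.exists_pow_eq_one hp ((0 : ZMod p), (1 : ZMod p)) (hsm _)
  have hcond : ∀ s : Ext c, s ^ p = 1 →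
      (zmultiplesHom (Additive (Ext c)) (Additive.ofMul s)) (p : ℤ) = 0 := by
    intro s hs
    show (p : ℤ) • Additive.ofMul s = 0
    rw [← ofMul_zpow, zpow_natCast, hs, ofMul_one]
  let σ₁ : ZMod p →+ Additive (Ext c) :=
    ZMod.lift p ⟨zmultiplesHom _ (Additive.ofMul s₁), hcond s₁ hs₁⟩
  let σ₂ : ZMod p →+ Additive (Ext c) :=
    ZMod.lift p ⟨zmultiplesHom _ (Additive.ofMul s₂), hcond s₂ hs₂⟩
  let σ : ZMod p × ZMod p →+ Additive (Ext c) :=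
    σ₁.comp (AddMonoidHom.fst _ _) + σ₂.comp (AddMonoidHom.snd _ _)
  have hcast : ∀ x : ZMod p, ((x.val : ℤ) : ZMod p) = x := by
    intro x
    push_cast
    simp [ZMod.natCast_val, ZMod.cast_id]
  have hσ₁ : ∀ x : ZMod p, Additive.toMul (σ₁ x) = s₁ ^ x.val := by
    intro x
    conv_lhs => rw [← hcast x]
    show Additive.toMul (ZMod.lift p _ (((x.val : ℤ) : ZMod p))) = _
    rw [ZMod.lift_coe]
    show Additive.toMul ((x.val : ℤ) • Additive.ofMul s₁) = _
    rw [toMul_zsmul, toMul_ofMul, zpow_natCast]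
  have hσ₂ : ∀ x : ZMod p, Additive.toMul (σ₂ x) = s₂ ^ x.val := by
    intro x
    conv_lhs => rw [← hcast x]
    show Additive.toMul (ZMod.lift p _ (((x.val : ℤ) : ZMod p))) = _
    rw [ZMod.lift_coe]
    show Additive.toMul ((x.val : ℤ) • Additive.ofMul s₂) = _
    rw [toMul_zsmul, toMul_ofMul, zpow_natCast]
  have hnsmul : ∀ (n : ℕ) (x y : ZMod p), n • ((x, y) : ZMod p × ZMod p)
      = ((n * x, n * y) : ZMod p × ZMod p) := by
    intro n x y
    ext <;> simp [nsmul_eq_mul]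
  have ht : ∀ a : ZMod p × ZMod p, (Additive.toMul (σ a)).t = a := by
    intro a
    have : σ a = σ₁ a.1 + σ₂ a.2 := rfl
    rw [this]
    show (Additive.toMul (σ₁ a.1) * Additive.toMul (σ₂ a.2)).t = a
    rw [mul_t, hσ₁, hσ₂, t_pow, t_pow, hs₁t, hs₂t, hnsmul, hnsmul]
    ext <;> simp [ZMod.natCast_val, ZMod.cast_id]
  refine ⟨fun a => ((Additive.toMul (σ a)).u)⁻¹, ?_⟩
  intro a b
  have hmul : Additive.toMul (σ (a + b))
      = Additive.toMul (σ a) * Additive.toMul (σ b) := by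
    rw [map_add]
    rfl
  have hu : (Additive.toMul (σ (a + b))).u
      = (Additive.toMul (σ a)).u * (Additive.toMul (σ b)).u * c.μ a b := by
    rw [hmul, mul_u, ht, ht]
  rw [inv_inv, hu]
  apply Units.ext
  simp only [Units.val_mul, Units.val_inv_eq_inv_val]
  field_simp

end SymCocycle

/-- The group of 2-cocycles on an abelian group `A` with values in `kˣ`
(trivial action), as a subgroup of the group of all functions `A → A → kˣ`
under pointwise multiplication. -/
def twoCocycles (A : Type*) [AddCommGroup A] (k : Type*) [Field k] :
    Subgroup (A → A → kˣ) where
  carrier := {μ | ∀ a b c : A, μ a b * μ (a + b) c = μ b c * μ a (b + c)}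
  one_mem' := by intro a b c; simp
  mul_mem' := by
    intro μ ν hμ hν a b c
    simp only [Pi.mul_apply]
    rw [mul_mul_mul_comm, hμ a b c, hν a b c, mul_mul_mul_comm]
  inv_mem' := by
    intro μ hμ a b c
    simp only [Pi.inv_apply]
    rw [← mul_inv, hμ a b c, mul_inv]

/-- The subgroup of coboundaries inside the group of 2-cocycles. -/
def twoCoboundaries (A : Type*) [AddCommGroup A] (k : Type*) [Field k] :
    Subgroup (twoCocycles A k) where
  carrier := {μ | ∃ f : A → kˣ,
    ∀ a b : A, (μ : A → A → kˣ) a b = f a * f b * (f (a + b))⁻¹}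
  one_mem' := ⟨1, by intro a b; simp⟩
  mul_mem' := by
    rintro μ ν ⟨f, hf⟩ ⟨g, hg⟩
    refine ⟨f * g, fun a b => ?_⟩
    have : ((μ * ν : twoCocycles A k) : A → A → kˣ) a b
        = (μ : A → A → kˣ) a b * (ν : A → A → kˣ) a b := rfl
    rw [this, hf, hg]
    simp only [Pi.mul_apply, mul_inv]
    simp [mul_comm, mul_left_comm, mul_assoc]
  inv_mem' := by
    rintro μ ⟨f, hf⟩
    refine ⟨f⁻¹, fun a b => ?_⟩
    have : ((μ⁻¹ : twoCocycles A k) : A → A → kˣ) a b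
        = ((μ : A → A → kˣ) a b)⁻¹ := rfl
    rw [this, hf]
    simp only [Pi.inv_apply, mul_inv, inv_inv]

/-- `H²((ℤ/pℤ)², kˣ) ≅ ℤ/pℤ`: the group of 2-cocycles on
`A = (ℤ/pℤ)²` with values in `kˣ` modulo coboundaries is isomorphic to `ℤ/pℤ`. -/
theorem stmt_8 (p : ℕ) (hp : p.Prime) (hodd : Odd p)
    (k : Type*) [Field k] [IsAlgClosed k] [CharZero k] :
    Nonempty ((twoCocycles (ZMod p × ZMod p) k ⧸ twoCoboundaries (ZMod p × ZMod p) k)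
      ≃* Multiplicative (ZMod p)) := by
  haveI hfact : Fact p.Prime := ⟨hp⟩
  haveI : NeZero p := ⟨hp.ne_zero⟩
  haveI : NeZero ((p : k)) := ⟨Nat.cast_ne_zero.mpr hp.ne_zero⟩
  set e₁ : (ZMod p × ZMod p) := ((1 : ZMod p), (0 : ZMod p)) with he₁
  set e₂ : (ZMod p × ZMod p) := ((0 : ZMod p), (1 : ZMod p)) with he₂
  -- cocycle condition for elements of the subgroup
  have hcoc : ∀ μ : twoCocycles (ZMod p × ZMod p) k, ∀ a b c : (ZMod p × ZMod p),
      (μ : (ZMod p × ZMod p) → (ZMod p × ZMod p) → kˣ) a b * (μ : (ZMod p × ZMod p) → (ZMod p × ZMod p) → kˣ) (a + b) c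
        = (μ : (ZMod p × ZMod p) → (ZMod p × ZMod p) → kˣ) b c * (μ : (ZMod p × ZMod p) → (ZMod p × ZMod p) → kˣ) a (b + c) := fun μ => μ.2
  -- the pairing homomorphism φ
  set φ : twoCocycles (ZMod p × ZMod p) k →* kˣ :=
    { toFun := fun μ => cocPair (μ : (ZMod p × ZMod p) → (ZMod p × ZMod p) → kˣ) e₁ e₂
      map_one' := by
        show cocPair ((1 : twoCocycles (ZMod p × ZMod p) k) : (ZMod p × ZMod p) → (ZMod p × ZMod p) → kˣ) e₁ e₂ = 1
        unfold cocPair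
        norm_num
      map_mul' := by
        intro μ ν
        show cocPair ((μ * ν : twoCocycles (ZMod p × ZMod p) k) : (ZMod p × ZMod p) → (ZMod p × ZMod p) → kˣ) e₁ e₂ = _
        unfold cocPair
        have hmm : ∀ a b : (ZMod p × ZMod p), ((μ * ν : twoCocycles (ZMod p × ZMod p) k) : (ZMod p × ZMod p) → (ZMod p × ZMod p) → kˣ) a b
            = (μ : (ZMod p × ZMod p) → (ZMod p × ZMod p) → kˣ) a b * (ν : (ZMod p × ZMod p) → (ZMod p × ZMod p) → kˣ) a b := fun a b => rfl
        rw [hmm, hmm, mul_inv, mul_mul_mul_comm] } with hφdef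
  have hφ_apply : ∀ μ : twoCocycles (ZMod p × ZMod p) k, φ μ = cocPair (μ : (ZMod p × ZMod p) → (ZMod p × ZMod p) → kˣ) e₁ e₂ :=
    fun μ => rfl
  have hzsm : ∀ y : ZMod p, p • y = 0 := fun y => by
    rw [nsmul_eq_mul, ZMod.natCast_self, zero_mul]
  have hsm : ∀ x : (ZMod p × ZMod p), p • x = 0 := fun x => by
    ext <;> simp [hzsm]
  have hcast : ∀ x : ZMod p, ((x.val : ℤ) : ZMod p) = x := by
    intro x
    push_cast
    simp [ZMod.natCast_val, ZMod.cast_id]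
  -- every value of φ is a p-th root of unity
  have hpow : ∀ μ : twoCocycles (ZMod p × ZMod p) k, (φ μ) ^ p = 1 := by
    intro μ
    rw [hφ_apply, ← cocPair_nsmul_left (hcoc μ), hsm, cocPair_zero_left (hcoc μ)]
  -- decomposition of elements of (ZMod p × ZMod p)
  have hnsmul : ∀ (n : ℕ) (x y : ZMod p), n • ((x, y) : (ZMod p × ZMod p)) = ((n * x, n * y) : (ZMod p × ZMod p)) := by
    intro n x y
    ext <;> simp [nsmul_eq_mul]
  have hdec : ∀ a : (ZMod p × ZMod p), a = a.1.val • e₁ + a.2.val • e₂ := by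
    intro a
    rw [hnsmul, hnsmul]
    ext <;> simp [Prod.fst_add, Prod.snd_add, ZMod.natCast_val, ZMod.cast_id]
  -- kernel elements are symmetric cocycles
  have hsymm : ∀ μ : twoCocycles (ZMod p × ZMod p) k, φ μ = 1 →
      ∀ a b : (ZMod p × ZMod p), (μ : (ZMod p × ZMod p) → (ZMod p × ZMod p) → kˣ) a b = (μ : (ZMod p × ZMod p) → (ZMod p × ZMod p) → kˣ) b a := by
    intro μ hμ1 a b
    have h12 : cocPair (μ : (ZMod p × ZMod p) → (ZMod p × ZMod p) → kˣ) e₁ e₂ = 1 := by rw [← hφ_apply]; exact hμ1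
    have h21 : cocPair (μ : (ZMod p × ZMod p) → (ZMod p × ZMod p) → kˣ) e₂ e₁ = 1 := by
      rw [cocPair_inv (hcoc μ), h12, inv_one]
    have key : cocPair (μ : (ZMod p × ZMod p) → (ZMod p × ZMod p) → kˣ) a b = 1 := by
      conv_lhs => rw [hdec a, hdec b]
      simp only [cocPair_add_left (hcoc μ), cocPair_add_right (hcoc μ),
        cocPair_nsmul_left (hcoc μ), cocPair_nsmul_right (hcoc μ),
        cocPair_self (hcoc μ), h12, h21, one_pow, mul_one, one_mul]
    exact mul_inv_eq_one.mp key
  -- the kernel of φ is exactly the subgroup of coboundaries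
  have hker : φ.ker = twoCoboundaries (ZMod p × ZMod p) k := by
    ext μ
    constructor
    · intro hμk
      have hμ1 : φ μ = 1 := hμk
      obtain ⟨f, hf⟩ :=
        SymCocycle.coboundary (⟨(μ : (ZMod p × ZMod p) → (ZMod p × ZMod p) → kˣ), hcoc μ, hsymm μ hμ1⟩ : SymCocycle (ZMod p × ZMod p) k)
      exact ⟨f, hf⟩
    · rintro ⟨f, hf⟩
      show φ μ = 1
      rw [hφ_apply]
      unfold cocPair
      rw [hf, hf, add_comm e₂ e₁, mul_inv_eq_one, mul_comm (f e₂) (f e₁)]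
  -- a primitive p-th root of unity
  obtain ⟨ζ₀, hζ₀⟩ := HasEnoughRootsOfUnity.exists_primitiveRoot k p
  set ζ : kˣ := (hζ₀.isUnit hp.ne_zero).unit with hζdef
  have hζ : IsPrimitiveRoot ζ p := hζ₀.isUnit_unit hp.ne_zero
  have hζp : ζ ^ p = 1 := by
    apply Units.ext
    push_cast
    rw [IsUnit.unit_spec]
    exact hζ₀.pow_eq_one
  -- the homomorphism ψ : Multiplicative (ZMod p) →* kˣ
  set ψ' : ZMod p →+ Additive kˣ :=
    ZMod.lift p ⟨zmultiplesHom _ (Additive.ofMul ζ), by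
      show (p : ℤ) • Additive.ofMul ζ = 0
      rw [← ofMul_zpow, zpow_natCast, hζp, ofMul_one]⟩ with hψ'def
  set ψ : Multiplicative (ZMod p) →* kˣ := AddMonoidHom.toMultiplicativeLeft ψ' with hψdef
  have hψint : ∀ m : ℤ, ψ (Multiplicative.ofAdd ((m : ZMod p))) = ζ ^ m := by
    intro m
    show Additive.toMul (ψ' ((m : ZMod p))) = ζ ^ m
    rw [hψ'def, ZMod.lift_coe]
    show Additive.toMul (m • Additive.ofMul ζ) = ζ ^ m
    rw [toMul_zsmul, toMul_ofMul]
  have hψval : ∀ x : ZMod p, ψ (Multiplicative.ofAdd x) = ζ ^ x.val := by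
    intro x
    conv_lhs => rw [← hcast x]
    rw [hψint, zpow_natCast]
  have hψinj : Function.Injective ψ := by
    rw [injective_iff_map_eq_one]
    intro a ha
    have h1 : ζ ^ (Multiplicative.toAdd a).val = 1 := by
      rw [← hψval]
      simpa using ha
    have h0 : (Multiplicative.toAdd a).val = 0 :=
      Nat.eq_zero_of_dvd_of_lt (hζ.dvd_of_pow_eq_one _ h1) (ZMod.val_lt _)
    have : Multiplicative.toAdd a = 0 := by rwa [← ZMod.val_eq_zero]
    exact toAdd_eq_zero.mp this
  -- the explicit cocycle with pairing ζ⁻¹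
  set cE : twoCocycles (ZMod p × ZMod p) k :=
    ⟨fun a b => ψ (Multiplicative.ofAdd (a.2 * b.1)), by
      intro a b c
      show ψ _ * ψ _ = ψ _ * ψ _
      rw [← ψ.map_mul, ← ψ.map_mul, ← ofAdd_add, ← ofAdd_add]
      congr 1
      show Multiplicative.ofAdd (a.2 * b.1 + (a + b).2 * c.1)
        = Multiplicative.ofAdd (b.2 * c.1 + a.2 * (b + c).1)
      congr 1
      simp only [Prod.fst_add, Prod.snd_add]
      ring⟩ with hcEdef
  have hφcE : φ cE = ζ⁻¹ := by
    rw [hφ_apply]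
    unfold cocPair
    show ψ (Multiplicative.ofAdd (e₁.2 * e₂.1)) * (ψ (Multiplicative.ofAdd (e₂.2 * e₁.1)))⁻¹ = ζ⁻¹
    have ha : (e₁.2 * e₂.1 : ZMod p) = 0 := by rw [he₁, he₂]; simp
    have hb : (e₂.2 * e₁.1 : ZMod p) = 1 := by rw [he₁, he₂]; simp
    rw [ha, hb, ofAdd_zero, map_one, one_mul, hψval, ZMod.val_one p, pow_one]
  -- the range of φ equals the range of ψ
  have hrange : φ.range = ψ.range := by
    ext x
    simp only [MonoidHom.mem_range]
    constructor
    · rintro ⟨μ, rfl⟩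
      have hx : φ μ ∈ rootsOfUnity p k := (mem_rootsOfUnity p (φ μ)).mpr (hpow μ)
      rw [← hζ.zpowers_eq] at hx
      obtain ⟨m, hm⟩ := Subgroup.mem_zpowers_iff.mp hx
      exact ⟨Multiplicative.ofAdd ((m : ZMod p)), by rw [hψint, hm]⟩
    · rintro ⟨y, rfl⟩
      refine ⟨cE ^ (-((Multiplicative.toAdd y).val : ℤ)), ?_⟩
      rw [map_zpow, hφcE]
      have hgp : (ζ⁻¹ : kˣ) ^ (-(((Multiplicative.toAdd y).val : ℕ) : ℤ))
          = ζ ^ (((Multiplicative.toAdd y).val : ℕ) : ℤ) := by group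
      rw [hgp, zpow_natCast, ← hψval]
      simp
  -- assemble the final isomorphism
  exact ⟨((QuotientGroup.quotientMulEquivOfEq hker.symm).trans
      (QuotientGroup.quotientKerEquivRange φ)).trans
      ((MulEquiv.subgroupCongr hrange).trans (MonoidHom.ofInjective hψinj).symm)⟩
end

section
/- Let t : A → A be the automorphism t(x,y) = (y,x) of A = (ℤ/pℤ) × (ℤ/pℤ). For every 2-cocycle μ on A with values in kˣ, the map (x,y) ↦ μ(t(x), t(y)) is a 2-cocycle cohomologous to the pointwise inverse μ⁻¹; i.e., t acts on H²(A, kˣ) by taking inverses. -/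
/-- A 2-cocycle on an abelian group `A` with values in `kˣ` (trivial action). -/
def IsTwoCocycle {A : Type*} [AddCommGroup A] {k : Type*} [Field k]
    (μ : A → A → kˣ) : Prop :=
  ∀ a b c : A, μ a b * μ (a + b) c = μ b c * μ a (b + c)

/-- A 2-coboundary on an abelian group `A` with values in `kˣ`. -/
def IsCoboundary {A : Type*} [AddCommGroup A] {k : Type*} [Field k]
    (μ : A → A → kˣ) : Prop :=
  ∃ f : A → kˣ, ∀ a b : A, μ a b = f a * f b * (f (a + b))⁻¹

/-- Two 2-cocycles are cohomologous if their pointwise quotient is a coboundary. -/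
def Cohomologous {A : Type*} [AddCommGroup A] {k : Type*} [Field k]
    (μ ν : A → A → kˣ) : Prop :=
  IsCoboundary (fun a b => μ a b * (ν a b)⁻¹)

section helpers

variable {A : Type*} [AddCommGroup A] {k : Type*} [Field k]

lemma cocycle_zero_left {μ : A → A → kˣ} (h : IsTwoCocycle μ) (b : A) : μ 0 b = μ 0 0 := by
  have h1 := h 0 0 b
  simp only [zero_add, add_zero] at h1
  exact (mul_right_cancel h1).symm

lemma cocycle_zero_right {μ : A → A → kˣ} (h : IsTwoCocycle μ) (b : A) : μ b 0 = μ 0 0 := by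
  have h1 := h b 0 0
  simp only [zero_add, add_zero] at h1
  exact mul_right_cancel h1

/-- helper to pass from `kˣ` equations to `k` equations -/
lemma units_eq_of_val {u v : kˣ} (h : (u : k) = v) : u = v := Units.ext h

/-- swap lemma for symmetric cocycles -/
lemma swap_lemma {μ : A → A → kˣ} (h : IsTwoCocycle μ) (hs : ∀ a b, μ a b = μ b a)
    (x y z : A) : μ x y * μ (x + y) z = μ x z * μ (x + z) y := by
  have h1 := h x y z
  have h2 := h x z y
  rw [hs y z] at h1
  rw [add_comm z y] at h2
  exact h1.trans h2.symm

/-- key exchange identity for symmetric cocycles -/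
lemma key_lemma {μ : A → A → kˣ} (h : IsTwoCocycle μ) (hs : ∀ a b, μ a b = μ b a)
    (x y z w : A) :
    μ x y * μ z w * μ (x + y) (z + w) = μ x z * μ y w * μ (x + z) (y + w) := by
  have h1 := h (x + y) z w
  have h2 := h (x + z) y w
  have h3 := swap_lemma h hs x y z
  -- LHS = μ x y * (μ (x+y) z * μ (x+y+z) w) [by h1]
  calc μ x y * μ z w * μ (x + y) (z + w)
      = μ x y * (μ z w * μ (x + y) (z + w)) := by rw [mul_assoc]
    _ = μ x y * (μ (x + y) z * μ (x + y + z) w) := by rw [← h1]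
    _ = (μ x y * μ (x + y) z) * μ (x + y + z) w := by rw [mul_assoc]
    _ = (μ x z * μ (x + z) y) * μ (x + z + y) w := by
        rw [h3]; congr 2; rw [add_right_comm]
    _ = μ x z * (μ (x + z) y * μ (x + z + y) w) := by rw [mul_assoc]
    _ = μ x z * (μ y w * μ (x + z) (y + w)) := by rw [h2]
    _ = μ x z * μ y w * μ (x + z) (y + w) := by rw [mul_assoc]

end helpers

section cyclic

variable {k : Type*} [Field k] [IsAlgClosed k]

/-- every 2-cocycle on a finite cyclic group with values in `kˣ`, `k` alg. closed,
is a coboundary -/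
lemma cyclic_coboundary {n : ℕ} [NeZero n] (ν : ZMod n → ZMod n → kˣ)
    (hν : IsTwoCocycle ν) : IsCoboundary ν := by
  set F : ℕ → kˣ := fun i => Nat.rec 1 (fun j Fj => Fj * ν (↑j) 1) i with hF
  have hF0 : F 0 = 1 := rfl
  have hFs : ∀ j : ℕ, F (j + 1) = F j * ν (↑j) 1 := fun j => rfl
  -- key recursion
  have hkey : ∀ j i : ℕ, ν (↑i) (↑j) * (F i * F j) = ν 0 0 * F (i + j) := by
    intro j
    induction j with
    | zero =>
      intro i
      have : ν (↑i) (↑(0:ℕ)) = ν 0 0 := by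
        rw [Nat.cast_zero]; exact cocycle_zero_right hν _
      rw [this, hF0, Nat.add_zero, mul_one, mul_comm]
    | succ j ih =>
      intro i
      have hc := hν (↑i) (↑j) 1
      have e1 : (↑i + ↑j : ZMod n) = ↑(i + j) := by push_cast; ring
      have e2 : (↑j + 1 : ZMod n) = ↑(j + 1) := by push_cast; ring
      rw [e1, e2] at hc
      rw [hFs j, show i + (j+1) = (i+j) + 1 from rfl, hFs (i+j)]
      apply units_eq_of_val
      have ih' := congrArg (Units.val) (ih i)
      have hc' := congrArg (Units.val) hc
      simp only [Units.val_mul] at ih' hc' ⊢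
      linear_combination ((ν (↑(i+j)) 1 : kˣ) : k) * ih' - ((F i : k) * (F j : k)) * hc'
  -- quasi-periodicity
  have hper : ∀ (q m : ℕ), F (m + n * q) = F m * (F n) ^ q := by
    intro q
    induction q with
    | zero => intro m; simp
    | succ q ih =>
      intro m
      have e : m + n * (q + 1) = (m + n * q) + n := by ring
      rw [e]
      have h2 := hkey n (m + n * q)
      rw [ZMod.natCast_self, cocycle_zero_right hν] at h2
      have : F (m + n * q) * F n = F (m + n * q + n) := mul_left_cancel h2
      rw [← this, ih, pow_succ, mul_assoc]
  -- extract an n-th root of F n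
  obtain ⟨s, hsn⟩ : ∃ s : kˣ, s ^ n = F n := by
    obtain ⟨z, hz⟩ := IsAlgClosed.exists_pow_nat_eq ((F n : k)) (Nat.pos_of_ne_zero (NeZero.ne n))
    have hz0 : z ≠ 0 := by
      intro h
      rw [h, zero_pow (NeZero.ne n)] at hz
      exact (Units.ne_zero (F n)) hz.symm
    exact ⟨Units.mk0 z hz0, Units.ext (by simpa using hz)⟩
  refine ⟨fun a => ν 0 0 * (F a.val)⁻¹ * s ^ a.val, ?_⟩
  intro a b
  have hv : ∀ c : ZMod n, ((c.val : ℕ) : ZMod n) = c := ZMod.natCast_rightInverse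
  have hm : a.val + b.val = (a + b).val + n * ((a.val + b.val) / n) := by
    rw [ZMod.val_add]; exact (Nat.mod_add_div _ n).symm
  set q := (a.val + b.val) / n with hq
  have hk := hkey b.val a.val
  rw [hv a, hv b] at hk
  rw [hm, hper q _] at hk
  have hspow : s ^ a.val * s ^ b.val = s ^ ((a + b).val) * (F n) ^ q := by
    rw [← pow_add, hm, pow_add, pow_mul, hsn]
  apply units_eq_of_val
  have hk' := congrArg (Units.val) hk
  have hs' := congrArg (Units.val) hspow
  simp only [Units.val_mul, Units.val_pow_eq_pow_val, Units.val_inv_eq_inv_val] at hk' hs' ⊢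
  have n1 : ((F a.val : kˣ) : k) ≠ 0 := Units.ne_zero _
  have n2 : ((F b.val : kˣ) : k) ≠ 0 := Units.ne_zero _
  have n3 : ((F (a + b).val : kˣ) : k) ≠ 0 := Units.ne_zero _
  have n4 : ((ν 0 0 : kˣ) : k) ≠ 0 := Units.ne_zero _
  have n5 : ((s : k) ^ (a + b).val) ≠ 0 := pow_ne_zero _ (Units.ne_zero s)
  field_simp
  linear_combination (((s:k) ^ (a+b).val)) * hk' - (((ν 0 0 : kˣ):k) * ((F (a+b).val : kˣ):k)) * hs'

end cyclic

section product

variable {k : Type*} [Field k] [IsAlgClosed k]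

/-- every symmetric 2-cocycle on `ZMod n × ZMod n` is a coboundary -/
lemma symm_coboundary {n : ℕ} [NeZero n]
    (ν : (ZMod n × ZMod n) → (ZMod n × ZMod n) → kˣ)
    (hν : IsTwoCocycle ν) (hsym : ∀ a b, ν a b = ν b a) : IsCoboundary ν := by
  have hc1 : IsTwoCocycle (fun x y : ZMod n => ν (x, 0) (y, 0)) := by
    intro a b c
    have := hν (a, 0) (b, 0) (c, 0)
    simpa [Prod.mk_add_mk] using this
  have hc2 : IsTwoCocycle (fun x y : ZMod n => ν (0, x) (0, y)) := by
    intro a b c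
    have := hν (0, a) (0, b) (0, c)
    simpa [Prod.mk_add_mk] using this
  obtain ⟨f₁, hf₁⟩ := cyclic_coboundary _ hc1
  obtain ⟨f₂, hf₂⟩ := cyclic_coboundary _ hc2
  refine ⟨fun a => f₁ a.1 * f₂ a.2 * (ν (a.1, 0) (0, a.2))⁻¹, ?_⟩
  intro a b
  have hK := key_lemma hν hsym (a.1, 0) (0, a.2) (b.1, 0) (0, b.2)
  have e1 : ((a.1, (0:ZMod n)) + ((0:ZMod n), a.2)) = a := by
    simp [Prod.mk_add_mk]
  have e2 : ((b.1, (0:ZMod n)) + ((0:ZMod n), b.2)) = b := by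
    simp [Prod.mk_add_mk]
  have e3 : ((a.1, (0:ZMod n)) + (b.1, (0:ZMod n))) = ((a+b).1, (0:ZMod n)) := by
    simp [Prod.mk_add_mk]
  have e4 : (((0:ZMod n), a.2) + ((0:ZMod n), b.2)) = ((0:ZMod n), (a+b).2) := by
    simp [Prod.mk_add_mk]
  rw [e1, e2, e3, e4] at hK
  have h1 := hf₁ a.1 b.1
  have h2 := hf₂ a.2 b.2
  simp only at h1 h2
  rw [h1, h2] at hK
  -- now pass to k
  apply units_eq_of_val
  have hK' := congrArg (Units.val) hK
  simp only [Units.val_mul, Units.val_inv_eq_inv_val, Prod.fst_add, Prod.snd_add] at hK' ⊢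
  have n1 : ((f₁ (a.1 + b.1) : kˣ) : k) ≠ 0 := Units.ne_zero _
  have n2 : ((f₂ (a.2 + b.2) : kˣ) : k) ≠ 0 := Units.ne_zero _
  have n3 : ((ν (a.1, 0) (0, a.2) : kˣ) : k) ≠ 0 := Units.ne_zero _
  have n4 : ((ν (b.1, 0) (0, b.2) : kˣ) : k) ≠ 0 := Units.ne_zero _
  have n5 : ((ν (a.1 + b.1, 0) (0, a.2 + b.2) : kˣ) : k) ≠ 0 := Units.ne_zero _
  field_simp at hK' ⊢
  linear_combination hK'

end product

section lam

variable {A : Type*} [AddCommGroup A] {k : Type*} [Field k]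

/-- the commutator pairing of a cocycle -/
def lamOf (μ : A → A → kˣ) : A → A → kˣ := fun a b => μ a b * (μ b a)⁻¹

lemma lam_skew (μ : A → A → kˣ) (a b : A) : lamOf μ b a = (lamOf μ a b)⁻¹ := by
  simp [lamOf, mul_inv_rev, mul_comm]

lemma lam_self (μ : A → A → kˣ) (a : A) : lamOf μ a a = 1 := by
  simp [lamOf]

lemma lam_zero_left {μ : A → A → kˣ} (h : IsTwoCocycle μ) (c : A) : lamOf μ 0 c = 1 := by
  simp [lamOf, cocycle_zero_left h, cocycle_zero_right h]

lemma lam_add_left {μ : A → A → kˣ} (h : IsTwoCocycle μ) (a b c : A) :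
    lamOf μ (a + b) c = lamOf μ a c * lamOf μ b c := by
  have h1 := congrArg (Units.val) (h a b c)
  have h2' := h c a b; rw [add_comm c a] at h2'
  have h3' := h a c b; rw [add_comm c b] at h3'
  have h2 := congrArg (Units.val) h2'
  have h3 := congrArg (Units.val) h3'
  unfold lamOf
  apply units_eq_of_val
  simp only [Units.val_mul, Units.val_inv_eq_inv_val] at h1 h2 h3 ⊢
  have n1 : ((μ c (a+b) : kˣ) : k) ≠ 0 := Units.ne_zero _
  have n2 : ((μ c a : kˣ) : k) ≠ 0 := Units.ne_zero _
  have n3 : ((μ c b : kˣ) : k) ≠ 0 := Units.ne_zero _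
  have hA : ((μ a b : kˣ) : k) * (((μ a b)⁻¹ : kˣ) : k) = 1 := by
    rw [← Units.val_mul]; simp
  field_simp
  linear_combination ((((μ a b)⁻¹ : kˣ) : k) * ((μ c a : kˣ) : k) * ((μ c b : kˣ) : k)) * h1 +
    ((((μ a b)⁻¹ : kˣ) : k) * ((μ a c : kˣ) : k) * ((μ b c : kˣ) : k)) * h2 -
    ((((μ a b)⁻¹ : kˣ) : k) * ((μ c a : kˣ) : k) * ((μ b c : kˣ) : k)) * h3 -
    (((μ (a+b) c : kˣ) : k) * ((μ c a : kˣ) : k) * ((μ c b : kˣ) : k) -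
      ((μ c (a+b) : kˣ) : k) * ((μ a c : kˣ) : k) * ((μ b c : kˣ) : k)) * hA

lemma lam_add_right {μ : A → A → kˣ} (h : IsTwoCocycle μ) (a b c : A) :
    lamOf μ a (b + c) = lamOf μ a b * lamOf μ a c := by
  rw [lam_skew μ (b + c) a, lam_add_left h b c a, lam_skew μ a b, lam_skew μ a c,
    mul_inv_rev, inv_inv, inv_inv, mul_comm]

lemma lam_nsmul_left {μ : A → A → kˣ} (h : IsTwoCocycle μ) (m : ℕ) (a b : A) :
    lamOf μ (m • a) b = (lamOf μ a b) ^ m := by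
  induction m with
  | zero => simp [lam_zero_left h]
  | succ m ih => rw [succ_nsmul, lam_add_left h, ih, pow_succ]

lemma lam_nsmul_right {μ : A → A → kˣ} (h : IsTwoCocycle μ) (m : ℕ) (a b : A) :
    lamOf μ a (m • b) = (lamOf μ a b) ^ m := by
  rw [lam_skew μ (m • b) a, lam_nsmul_left h, lam_skew μ a b, inv_pow, inv_inv]

end lam

section formula

variable {k : Type*} [Field k]

lemma decomp {n : ℕ} [NeZero n] (c : ZMod n × ZMod n) :
    c = c.1.val • ((1 : ZMod n), (0 : ZMod n)) + c.2.val • ((0 : ZMod n), (1 : ZMod n)) := by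
  have h1 : ((c.1.val : ℕ) : ZMod n) = c.1 := ZMod.natCast_rightInverse c.1
  have h2 : ((c.2.val : ℕ) : ZMod n) = c.2 := ZMod.natCast_rightInverse c.2
  apply Prod.ext <;> simp [Prod.smul_fst, Prod.smul_snd, nsmul_eq_mul, h1, h2]

lemma lam_formula {n : ℕ} [NeZero n] {μ : (ZMod n × ZMod n) → (ZMod n × ZMod n) → kˣ}
    (h : IsTwoCocycle μ) (a b : ZMod n × ZMod n) :
    lamOf μ a b = (lamOf μ (1, 0) (0, 1)) ^ (a.1.val * b.2.val) *
      ((lamOf μ (1, 0) (0, 1)) ^ (a.2.val * b.1.val))⁻¹ := by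
  set e₁ : ZMod n × ZMod n := ((1 : ZMod n), (0 : ZMod n)) with he₁
  set e₂ : ZMod n × ZMod n := ((0 : ZMod n), (1 : ZMod n)) with he₂
  set ω := lamOf μ e₁ e₂ with hω
  have key1 : lamOf μ e₁ b = ω ^ b.2.val := by
    conv_lhs => rw [decomp b]
    rw [lam_add_right h, lam_nsmul_right h, lam_nsmul_right h, lam_self, one_pow, one_mul]
  have key2 : lamOf μ e₂ b = (ω ^ b.1.val)⁻¹ := by
    conv_lhs => rw [decomp b]
    rw [lam_add_right h, lam_nsmul_right h, lam_nsmul_right h, lam_self, one_pow, mul_one,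
      lam_skew μ e₁ e₂, inv_pow]
  conv_lhs => rw [decomp a]
  rw [lam_add_left h, lam_nsmul_left h, lam_nsmul_left h, key1, key2,
    ← pow_mul, inv_pow, ← pow_mul, Nat.mul_comm b.2.val a.1.val, Nat.mul_comm b.1.val a.2.val]

end formula

/-- For the swap automorphism `t(x,y) = (y,x)` of `A = (ℤ/pℤ)²`
and any 2-cocycle `μ` on `A` with values in `kˣ`, the pullback
`(x,y) ↦ μ(t x, t y)` is a 2-cocycle cohomologous to the pointwise inverse
`μ⁻¹`; i.e. `t` acts on `H²(A, kˣ)` by taking inverses. -/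
theorem stmt_10 (p : ℕ) (hp : p.Prime) (hodd : Odd p)
    (k : Type*) [Field k] [IsAlgClosed k] [CharZero k]
    (t : ZMod p × ZMod p → ZMod p × ZMod p)
    (ht : ∀ a : ZMod p × ZMod p, t a = (a.2, a.1))
    (μ : (ZMod p × ZMod p) → (ZMod p × ZMod p) → kˣ)
    (hμ : IsTwoCocycle μ) :
    IsTwoCocycle (fun x y => μ (t x) (t y)) ∧
    Cohomologous (fun x y => μ (t x) (t y)) (fun x y => (μ x y)⁻¹) := by
  haveI : NeZero p := ⟨hp.ne_zero⟩
  have htadd : ∀ a b : ZMod p × ZMod p, t (a + b) = t a + t b := by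
    intro a b
    rw [ht, ht, ht]
    simp [Prod.mk_add_mk]
  have hco : IsTwoCocycle (fun x y => μ (t x) (t y)) := by
    intro a b c
    simp only
    rw [htadd, htadd]
    exact hμ (t a) (t b) (t c)
  refine ⟨hco, ?_⟩
  have hre : (fun a b : ZMod p × ZMod p =>
      (fun x y => μ (t x) (t y)) a b * ((fun x y => (μ x y)⁻¹) a b)⁻¹) =
      fun a b => μ (t a) (t b) * μ a b := by
    funext a b
    simp
  unfold Cohomologous
  rw [hre]
  -- the product cocycle
  have hνc : IsTwoCocycle (fun a b => μ (t a) (t b) * μ a b) := by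
    intro a b c
    simp only
    calc (μ (t a) (t b) * μ a b) * (μ (t (a+b)) (t c) * μ (a+b) c)
        = (μ (t a) (t b) * μ (t (a+b)) (t c)) * (μ a b * μ (a+b) c) :=
          mul_mul_mul_comm _ _ _ _
      _ = (μ (t b) (t c) * μ (t a) (t (b+c))) * (μ b c * μ a (b+c)) := by
          rw [hco a b c, hμ a b c]
      _ = (μ (t b) (t c) * μ b c) * (μ (t a) (t (b+c)) * μ a (b+c)) :=
          mul_mul_mul_comm _ _ _ _
  -- symmetry of the product cocycle
  have hνs : ∀ a b : ZMod p × ZMod p, μ (t a) (t b) * μ a b = μ (t b) (t a) * μ b a := by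
    intro a b
    have hlam : lamOf μ (t a) (t b) = lamOf μ b a := by
      rw [lam_formula hμ (t a) (t b), lam_formula hμ b a, ht a, ht b]
      simp only
      rw [Nat.mul_comm a.2.val b.1.val, Nat.mul_comm a.1.val b.2.val]
    have hlam' := congrArg (Units.val) hlam
    apply units_eq_of_val
    simp only [lamOf, Units.val_mul, Units.val_inv_eq_inv_val] at hlam' ⊢
    have n1 : ((μ (t b) (t a) : kˣ) : k) ≠ 0 := Units.ne_zero _
    have n2 : ((μ a b : kˣ) : k) ≠ 0 := Units.ne_zero _
    field_simp at hlam' ⊢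
    linear_combination hlam'
  exact symm_coboundary _ hνc hνs
end

section
/- Let s : A → A be the automorphism s(x,y) = (−x, y) of A = (ℤ/pℤ) × (ℤ/pℤ). If μ is a 2-cocycle on A with values in kˣ such that the 2-cocycle (x,y) ↦ μ(s(x), s(y)) is cohomologous to μ, then μ is a coboundary; i.e., the only s-invariant class in H²(A, kˣ) is the trivial one. -/
/-- The underlying type of the central extension of `A` by `kˣ` determined by `μ`. -/
@[ext]
structure ExtG {k : Type*} [Field k] {A : Type*} [AddCommGroup A]
    (μ : A → A → kˣ) : Type _ where
  u : kˣ
  v : A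

/-- The commutative monoid structure on the extension, for a normalized symmetric cocycle. -/
def extCM {k : Type*} [Field k] {A : Type*} [AddCommGroup A] (μ : A → A → kˣ)
    (hc : IsTwoCocycle μ) (hsym : ∀ a b, μ a b = μ b a) (hz : ∀ a, μ a 0 = 1) :
    CommMonoid (ExtG μ) where
  mul x y := ⟨x.u * y.u * μ x.v y.v, x.v + y.v⟩
  one := ⟨1, 0⟩
  mul_assoc x y z := by
    obtain ⟨xu, xv⟩ := x; obtain ⟨yu, yv⟩ := y; obtain ⟨zu, zv⟩ := z
    refine ExtG.ext ?_ (add_assoc _ _ _)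
    show xu * yu * μ xv yv * zu * μ (xv + yv) zv
        = xu * (yu * zu * μ yv zv) * μ xv (yv + zv)
    have h := congrArg Units.val (hc xv yv zv)
    push_cast at h
    rw [Units.ext_iff]
    push_cast
    linear_combination ((xu : k) * yu * zu) * h
  one_mul x := by
    obtain ⟨xu, xv⟩ := x
    refine ExtG.ext ?_ (zero_add _)
    show 1 * xu * μ 0 xv = xu
    rw [hsym 0 xv, hz, one_mul, mul_one]
  mul_one x := by
    obtain ⟨xu, xv⟩ := x
    refine ExtG.ext ?_ (add_zero _)
    show xu * 1 * μ xv 0 = xu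
    rw [hz, mul_one, mul_one]
  mul_comm x y := by
    obtain ⟨xu, xv⟩ := x; obtain ⟨yu, yv⟩ := y
    refine ExtG.ext ?_ (add_comm _ _)
    show xu * yu * μ xv yv = yu * xu * μ yv xv
    rw [hsym xv yv, mul_comm xu yu]

theorem coboundary_of_symm {p : ℕ} (hp0 : 0 < p) {k : Type*} [Field k] [IsAlgClosed k]
    (μ : ZMod p × ZMod p → ZMod p × ZMod p → kˣ)
    (hc : IsTwoCocycle μ) (hsym : ∀ a b, μ a b = μ b a) (h00 : μ 0 0 = 1) :
    IsCoboundary μ := by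
  haveI : NeZero p := ⟨hp0.ne'⟩
  -- normalization facts
  have hz : ∀ a, μ a 0 = 1 := by
    intro a
    have h := hc a 0 0
    simp only [add_zero, zero_add] at h
    have h2 : μ a 0 = μ 0 0 := mul_right_cancel h
    rw [h2, h00]
  have hz0 : ∀ b, μ 0 b = 1 := fun b => (hsym 0 b).trans (hz b)
  letI M : CommMonoid (ExtG μ) := extCM μ hc hsym hz
  set e1 : ZMod p × ZMod p := (1, 0) with he1
  set e2 : ZMod p × ZMod p := (0, 1) with he2
  set x1 : ExtG μ := ⟨1, e1⟩ with hx1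
  set x2 : ExtG μ := ⟨1, e2⟩ with hx2
  have hone_v : (1 : ExtG μ).v = 0 := rfl
  have hmul_u : ∀ x y : ExtG μ, (x * y).u = x.u * y.u * μ x.v y.v := fun _ _ => rfl
  have hmul_v : ∀ x y : ExtG μ, (x * y).v = x.v + y.v := fun _ _ => rfl
  have hpow_v : ∀ (x : ExtG μ) (n : ℕ), (x ^ n).v = n • x.v := by
    intro x n
    induction n with
    | zero => rw [pow_zero, zero_nsmul]; exact hone_v
    | succ n ih => rw [pow_succ, hmul_v, ih, succ_nsmul]
  have hcent : ∀ (y : ExtG μ) (c : ℕ), y.v = 0 → (y ^ c).u = y.u ^ c := by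
    intro y c hy
    induction c with
    | zero => rw [pow_zero, pow_zero]; rfl
    | succ c ih =>
        rw [pow_succ, hmul_u, ih, hpow_v, hy, smul_zero, h00, mul_one, pow_succ]
  have hv12 : ∀ m n : ℕ, (x1 ^ m * x2 ^ n).v = ((m : ZMod p), (n : ZMod p)) := by
    intro m n
    rw [hmul_v, hpow_v, hpow_v, hx1, hx2]
    show m • e1 + n • e2 = _
    rw [he1, he2]
    simp [Prod.ext_iff, nsmul_eq_mul]
  have hkey : ∀ m n m' n' : ℕ, (x1 ^ (m + m') * x2 ^ (n + n')).u
      = (x1 ^ m * x2 ^ n).u * (x1 ^ m' * x2 ^ n').u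
        * μ ((m : ZMod p), (n : ZMod p)) ((m' : ZMod p), (n' : ZMod p)) := by
    intro m n m' n'
    have hre : x1 ^ (m + m') * x2 ^ (n + n') = (x1 ^ m * x2 ^ n) * (x1 ^ m' * x2 ^ n') := by
      rw [pow_add, pow_add, mul_mul_mul_comm]
    rw [hre, hmul_u, hv12, hv12]
  have hx1p : (x1 ^ p).v = 0 := by
    rw [hpow_v, hx1]
    show p • e1 = 0
    rw [he1]; simp [Prod.ext_iff, nsmul_eq_mul, ZMod.natCast_self]
  have hx2p : (x2 ^ p).v = 0 := by
    rw [hpow_v, hx2]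
    show p • e2 = 0
    rw [he2]; simp [Prod.ext_iff, nsmul_eq_mul, ZMod.natCast_self]
  set z1 : kˣ := (x1 ^ p).u with hz1
  set z2 : kˣ := (x2 ^ p).u with hz2
  have hshift1 : ∀ m n c : ℕ, (x1 ^ (m + p * c) * x2 ^ n).u = (x1 ^ m * x2 ^ n).u * z1 ^ c := by
    intro m n c
    have hre : x1 ^ (m + p * c) * x2 ^ n = (x1 ^ m * x2 ^ n) * ((x1 ^ p) ^ c) := by
      rw [pow_add, pow_mul, mul_right_comm]
    rw [hre, hmul_u, hcent _ c hx1p, hpow_v, hx1p, smul_zero, hz, mul_one, hz1]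
  have hshift2 : ∀ m n c : ℕ, (x1 ^ m * x2 ^ (n + p * c)).u = (x1 ^ m * x2 ^ n).u * z2 ^ c := by
    intro m n c
    have hre : x1 ^ m * x2 ^ (n + p * c) = (x1 ^ m * x2 ^ n) * ((x2 ^ p) ^ c) := by
      rw [pow_add, pow_mul, mul_assoc]
    rw [hre, hmul_u, hcent _ c hx2p, hpow_v, hx2p, smul_zero, hz, mul_one, hz2]
  -- p-th roots of z1, z2
  obtain ⟨w1k, hw1k⟩ := IsAlgClosed.exists_pow_nat_eq (z1 : k) hp0
  obtain ⟨w2k, hw2k⟩ := IsAlgClosed.exists_pow_nat_eq (z2 : k) hp0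
  have hw1ne : w1k ≠ 0 := by
    intro h; rw [h, zero_pow hp0.ne'] at hw1k; exact z1.ne_zero hw1k.symm
  have hw2ne : w2k ≠ 0 := by
    intro h; rw [h, zero_pow hp0.ne'] at hw2k; exact z2.ne_zero hw2k.symm
  set w1 : kˣ := Units.mk0 w1k hw1ne with hw1
  set w2 : kˣ := Units.mk0 w2k hw2ne with hw2
  have hw1p : w1 ^ p = z1 := by
    rw [Units.ext_iff]; push_cast; rw [hw1]; exact hw1k
  have hw2p : w2 ^ p = z2 := by
    rw [Units.ext_iff]; push_cast; rw [hw2]; exact hw2k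
  refine ⟨fun a => (x1 ^ a.1.val * x2 ^ a.2.val).u⁻¹ * w1 ^ a.1.val * w2 ^ a.2.val, ?_⟩
  intro a b
  dsimp only
  set m := a.1.val
  set n := a.2.val
  set m' := b.1.val
  set n' := b.2.val
  have hsm : m + m' = (a + b).1.val + p * ((m + m') / p) := by
    have : (a + b).1 = a.1 + b.1 := rfl
    rw [this, ZMod.val_add]
    exact (Nat.mod_add_div _ _).symm
  have hsn : n + n' = (a + b).2.val + p * ((n + n') / p) := by
    have : (a + b).2 = a.2 + b.2 := rfl
    rw [this, ZMod.val_add]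
    exact (Nat.mod_add_div _ _).symm
  set c1 := (m + m') / p
  set c2 := (n + n') / p
  set sm := (a + b).1.val
  set sn := (a + b).2.val
  -- the two evaluations of Φ (m+m') (n+n')
  have h1 : (x1 ^ (m + m') * x2 ^ (n + n')).u
      = (x1 ^ m * x2 ^ n).u * (x1 ^ m' * x2 ^ n').u * μ a b := by
    rw [hkey]
    congr 1
    · congr 1 <;> exact Prod.ext (ZMod.natCast_rightInverse _) (ZMod.natCast_rightInverse _)
  have h2 : (x1 ^ (m + m') * x2 ^ (n + n')).u
      = (x1 ^ sm * x2 ^ sn).u * z2 ^ c2 * z1 ^ c1 := by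
    conv_lhs => rw [hsm, hsn]
    rw [hshift1, hshift2]
  have eqA : (x1 ^ m * x2 ^ n).u * (x1 ^ m' * x2 ^ n').u * μ a b
      = (x1 ^ sm * x2 ^ sn).u * z2 ^ c2 * z1 ^ c1 := by rw [← h1, h2]
  have eqW1 : w1 ^ m * w1 ^ m' = w1 ^ sm * z1 ^ c1 := by
    rw [← pow_add, hsm, pow_add, pow_mul, hw1p]
  have eqW2 : w2 ^ n * w2 ^ n' = w2 ^ sn * z2 ^ c2 := by
    rw [← pow_add, hsn, pow_add, pow_mul, hw2p]
  -- final computation in kˣ via k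
  have hA := congrArg Units.val eqA
  have hB := congrArg Units.val eqW1
  have hC := congrArg Units.val eqW2
  push_cast at hA hB hC
  rw [Units.ext_iff]
  push_cast
  have n1 : ((x1 ^ m * x2 ^ n).u : k) ≠ 0 := Units.ne_zero _
  have n2 : ((x1 ^ m' * x2 ^ n').u : k) ≠ 0 := Units.ne_zero _
  have n3 : ((x1 ^ sm * x2 ^ sn).u : k) ≠ 0 := Units.ne_zero _
  field_simp
  linear_combination (-(((x1 ^ sm * x2 ^ sn).u : k) * (w2:k) ^ n * (w2:k) ^ n')) * hB
    - (((x1 ^ sm * x2 ^ sn).u : k) * (w1:k) ^ sm * (z1:k) ^ c1) * hC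
    + ((w1:k) ^ sm * (w2:k) ^ sn) * hA

/-- The commutator pairing of a 2-cocycle. -/
def pairing {A : Type*} [AddCommGroup A] {k : Type*} [Field k]
    (μ : A → A → kˣ) (a b : A) : kˣ := μ a b * (μ b a)⁻¹

theorem pairing_add_left {A : Type*} [AddCommGroup A] {k : Type*} [Field k]
    (μ : A → A → kˣ) (hc : IsTwoCocycle μ) (a b d : A) :
    pairing μ (a + b) d = pairing μ a d * pairing μ b d := by
  have h1 := congrArg Units.val (hc a b d)
  have h2 := congrArg Units.val (hc d a b)
  have h3 := congrArg Units.val (hc a d b)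
  rw [add_comm d a] at h2
  rw [add_comm d b] at h3
  push_cast at h1 h2 h3
  -- cleared form
  have hkey : (μ a b : k) * (μ a d) * ((μ (a+b) d : k) * μ d a * μ d b)
      = (μ a b : k) * (μ a d) * ((μ a d : k) * μ b d * μ d (a+b)) := by
    linear_combination ((μ d a : k) * μ d b * μ a d) * h1
      + ((μ a d : k)^2 * μ b d) * h2
      - ((μ d a : k) * μ a d * μ b d) * h3
  have hne : (μ a b : k) * (μ a d) ≠ 0 := mul_ne_zero (Units.ne_zero _) (Units.ne_zero _)
  have hcl : (μ (a+b) d : k) * μ d a * μ d b = (μ a d : k) * μ b d * μ d (a+b) :=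
    mul_left_cancel₀ hne hkey
  unfold pairing
  rw [Units.ext_iff]
  push_cast
  have n1 : (μ d (a+b) : k) ≠ 0 := Units.ne_zero _
  have n2 : (μ d a : k) ≠ 0 := Units.ne_zero _
  have n3 : (μ d b : k) ≠ 0 := Units.ne_zero _
  field_simp
  linear_combination hcl

theorem pairing_symm {A : Type*} [AddCommGroup A] {k : Type*} [Field k]
    (μ : A → A → kˣ) (a b : A) : pairing μ b a = (pairing μ a b)⁻¹ := by
  unfold pairing
  rw [mul_inv_rev, inv_inv, mul_comm]

theorem pairing_self {A : Type*} [AddCommGroup A] {k : Type*} [Field k]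
    (μ : A → A → kˣ) (a : A) : pairing μ a a = 1 := by
  unfold pairing; simp

theorem pairing_zero_left {A : Type*} [AddCommGroup A] {k : Type*} [Field k]
    (μ : A → A → kˣ) (hc : IsTwoCocycle μ) (b : A) : pairing μ 0 b = 1 := by
  have h := pairing_add_left μ hc 0 0 b
  rw [add_zero] at h
  exact (mul_eq_left.mp h.symm)

theorem pairing_add_right {A : Type*} [AddCommGroup A] {k : Type*} [Field k]
    (μ : A → A → kˣ) (hc : IsTwoCocycle μ) (a b d : A) :
    pairing μ a (b + d) = pairing μ a b * pairing μ a d := by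
  rw [pairing_symm μ (b+d) a, pairing_symm μ b a, pairing_symm μ d a,
    pairing_add_left μ hc b d a, mul_inv_rev, mul_comm]

theorem pairing_neg_left {A : Type*} [AddCommGroup A] {k : Type*} [Field k]
    (μ : A → A → kˣ) (hc : IsTwoCocycle μ) (a b : A) :
    pairing μ (-a) b = (pairing μ a b)⁻¹ := by
  have h := pairing_add_left μ hc a (-a) b
  rw [add_neg_cancel, pairing_zero_left μ hc] at h
  exact (eq_inv_of_mul_eq_one_right h.symm)

theorem pairing_nsmul_left {A : Type*} [AddCommGroup A] {k : Type*} [Field k]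
    (μ : A → A → kˣ) (hc : IsTwoCocycle μ) (n : ℕ) (a b : A) :
    pairing μ (n • a) b = pairing μ a b ^ n := by
  induction n with
  | zero => rw [zero_nsmul, pow_zero]; exact pairing_zero_left μ hc b
  | succ n ih => rw [succ_nsmul, pairing_add_left μ hc, ih, pow_succ]

theorem pairing_nsmul_right {A : Type*} [AddCommGroup A] {k : Type*} [Field k]
    (μ : A → A → kˣ) (hc : IsTwoCocycle μ) (n : ℕ) (a b : A) :
    pairing μ a (n • b) = pairing μ a b ^ n := by
  rw [pairing_symm μ (n • b) a, pairing_nsmul_left μ hc, ← inv_pow,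
    ← pairing_symm μ b a]


theorem zmodpair_decomp {p : ℕ} [NeZero p] (a : ZMod p × ZMod p) :
    a.1.val • ((1,0) : ZMod p × ZMod p) + a.2.val • (0,1) = a := by
  simp [Prod.ext_iff, nsmul_eq_mul, ZMod.natCast_rightInverse a.1, ZMod.natCast_rightInverse a.2]

/-- For the automorphism `s(x,y) = (−x,y)` of `A = (ℤ/pℤ)²`,
the only `s`-invariant class in `H²(A, kˣ)` is the trivial one: if the
pullback of a 2-cocycle `μ` along `s` is cohomologous to `μ`, then `μ` is a
coboundary. -/
theorem stmt_11 (p : ℕ) (hp : p.Prime) (hodd : Odd p)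
    (k : Type*) [Field k] [IsAlgClosed k] [CharZero k]
    (s : ZMod p × ZMod p → ZMod p × ZMod p)
    (hs : ∀ a : ZMod p × ZMod p, s a = (-a.1, a.2))
    (μ : (ZMod p × ZMod p) → (ZMod p × ZMod p) → kˣ)
    (hμ : IsTwoCocycle μ)
    (hinv : Cohomologous (fun x y => μ (s x) (s y)) μ) :
    IsCoboundary μ := by
  haveI : NeZero p := ⟨hp.ne_zero⟩
  set e1 : ZMod p × ZMod p := (1, 0) with he1
  set e2 : ZMod p × ZMod p := (0, 1) with he2
  -- Step 1: invariance of the commutator pairing under cohomology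
  obtain ⟨f, hf⟩ := hinv
  simp only [] at hf
  have hpair_inv : ∀ a b, pairing μ (s a) (s b) = pairing μ a b := by
    intro a b
    have h1 := mul_inv_eq_iff_eq_mul.mp (hf a b)
    have h2 := mul_inv_eq_iff_eq_mul.mp (hf b a)
    rw [add_comm b a] at h2
    unfold pairing
    rw [h1, h2]
    have k1 : (f (a+b) : k) ≠ 0 := Units.ne_zero _
    have k2 : (μ b a : k) ≠ 0 := Units.ne_zero _
    rw [Units.ext_iff]
    push_cast
    field_simp
  -- Step 2: the pairing is trivial, hence μ is symmetric
  have hse1 : s e1 = -e1 := by rw [hs, he1]; simp [Prod.ext_iff]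
  have hse2 : s e2 = e2 := by rw [hs, he2]; simp [Prod.ext_iff]
  have hζ2 : pairing μ e1 e2 * pairing μ e1 e2 = 1 := by
    have h := hpair_inv e1 e2
    rw [hse1, hse2, pairing_neg_left μ hμ] at h
    calc pairing μ e1 e2 * pairing μ e1 e2
        = pairing μ e1 e2 * (pairing μ e1 e2)⁻¹ := by rw [h]
      _ = 1 := by group
  have hpe1 : p • e1 = 0 := by
    rw [he1]; simp [Prod.ext_iff, nsmul_eq_mul, ZMod.natCast_self]
  have hpe2 : p • e2 = 0 := by
    rw [he2]; simp [Prod.ext_iff, nsmul_eq_mul, ZMod.natCast_self]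
  have hζp : pairing μ e1 e2 ^ p = 1 := by
    rw [← pairing_nsmul_left μ hμ, hpe1, pairing_zero_left μ hμ]
  have hζ : pairing μ e1 e2 = 1 := by
    obtain ⟨t, ht⟩ := hodd
    have : pairing μ e1 e2 ^ p = (pairing μ e1 e2 * pairing μ e1 e2) ^ t * pairing μ e1 e2 := by
      have h0 : pairing μ e1 e2 ^ p = pairing μ e1 e2 ^ (2 * t + 1) :=
        congrArg (fun n : ℕ => pairing μ e1 e2 ^ n) ht
      rw [h0, pow_succ, pow_mul, pow_two]
    rw [hζp, hζ2, one_pow, one_mul] at this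
    exact this.symm
  have hζ' : pairing μ e2 e1 = 1 := by rw [pairing_symm μ e1 e2, hζ, inv_one]
  have hrow : ∀ (u : ZMod p × ZMod p), (pairing μ u e1 = 1 ∧ pairing μ u e2 = 1) →
      ∀ b, pairing μ u b = 1 := by
    intro u hu b
    have hb := zmodpair_decomp (p := p) b
    rw [← he1, ← he2] at hb
    rw [← hb, pairing_add_right μ hμ, pairing_nsmul_right μ hμ, pairing_nsmul_right μ hμ,
      hu.1, hu.2, one_pow, one_pow, one_mul]
  have hall : ∀ a b, pairing μ a b = 1 := by
    intro a b
    have ha := zmodpair_decomp (p := p) a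
    rw [← he1, ← he2] at ha
    rw [← ha, pairing_add_left μ hμ, pairing_nsmul_left μ hμ, pairing_nsmul_left μ hμ,
      hrow e1 ⟨pairing_self μ e1, hζ⟩ b, hrow e2 ⟨hζ', pairing_self μ e2⟩ b,
      one_pow, one_pow, one_mul]
  have hμsym : ∀ a b, μ a b = μ b a := by
    intro a b
    exact mul_inv_eq_one.mp (hall a b)
  -- Step 3: normalize and apply the symmetric case
  set u : kˣ := μ 0 0 with hu
  set ν : (ZMod p × ZMod p) → (ZMod p × ZMod p) → kˣ := fun a b => μ a b * u⁻¹ with hν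
  have hνc : IsTwoCocycle ν := by
    intro a b c
    show μ a b * u⁻¹ * (μ (a + b) c * u⁻¹) = μ b c * u⁻¹ * (μ a (b + c) * u⁻¹)
    rw [mul_mul_mul_comm, hμ a b c, mul_mul_mul_comm]
  have hνsym : ∀ a b, ν a b = ν b a := by
    intro a b; show μ a b * u⁻¹ = μ b a * u⁻¹; rw [hμsym a b]
  have hν00 : ν 0 0 = 1 := by
    show μ 0 0 * u⁻¹ = 1; rw [hu]; group
  obtain ⟨g, hg⟩ := coboundary_of_symm hp.pos ν hνc hνsym hν00
  refine ⟨fun a => g a * u, ?_⟩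
  intro a b
  dsimp only
  have h := hg a b
  rw [hν] at h
  simp only [] at h
  -- h : μ a b * u⁻¹ = g a * g b * (g (a+b))⁻¹
  have h' := mul_inv_eq_iff_eq_mul.mp h
  rw [h']
  have k1 : (g (a+b) : k) ≠ 0 := Units.ne_zero _
  rw [Units.ext_iff]
  push_cast
  field_simp
end

section
/- A subgroup N of G = D₂ₚ × ℤ/pℤ is normal and abelian if and only if N is one of the following four subgroups: the trivial subgroup, R × {0}, {1} × ℤ/pℤ, and R × ℤ/pℤ. In particular, G has exactly two normal subgroups of order p and its normal abelian subgroups have orders 1, p, p, and p². -/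
/-- The cyclic subgroup of rotations of the dihedral group `DihedralGroup n`. -/
def rotations (n : ℕ) : Subgroup (DihedralGroup n) where
  carrier := Set.range DihedralGroup.r
  one_mem' := ⟨0, rfl⟩
  mul_mem' := by
    rintro _ _ ⟨i, rfl⟩ ⟨j, rfl⟩
    exact ⟨i + j, (DihedralGroup.r_mul_r i j).symm⟩
  inv_mem' := by
    rintro _ ⟨i, rfl⟩
    exact ⟨-i, rfl⟩

namespace StmtAux
open DihedralGroup

variable {p : ℕ}

lemma mem_rotations (x : DihedralGroup p) : x ∈ rotations p ↔ ∃ i, r i = x := Iff.rfl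

lemma r_inj : Function.Injective (r : ZMod p → DihedralGroup p) := fun a b h => by
  injection h

@[simp] lemma inv_r (i : ZMod p) : (r i)⁻¹ = r (-i) := rfl
@[simp] lemma inv_sr (i : ZMod p) : (sr i)⁻¹ = sr i := rfl

lemma r_pow (i : ZMod p) (n : ℕ) : (r i) ^ n = r ((n : ZMod p) * i) := by
  induction n with
  | zero => simp
  | succ n ih =>
    rw [pow_succ, ih, r_mul_r]
    congr 1
    push_cast
    ring

lemma rotations_normal : (rotations p).Normal := by
  constructor
  rintro x ⟨i, rfl⟩ g
  cases g with
  | r j => exact ⟨i, by simp [r_mul_r, mul_assoc]⟩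
  | sr j => exact ⟨-i, by simp [sr_mul_r, sr_mul_sr, mul_assoc]⟩

section
variable (hp : p.Prime) (hodd : Odd p)

abbrev G (p : ℕ) := DihedralGroup p × Multiplicative (ZMod p)

include hp hodd in
lemma p_ne_two : p ≠ 2 := by
  rintro rfl
  exact (Nat.not_odd_iff_even.mpr even_two) hodd

include hp hodd in
lemma two_ne_zero' : (2 : ZMod p) ≠ 0 := by
  haveI := Fact.mk hp
  intro h
  have : ((2 : ℕ) : ZMod p) = 0 := by push_cast; exact h
  have hd : p ∣ 2 := (ZMod.natCast_eq_zero_iff 2 p).mp this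
  exact p_ne_two hp hodd ((Nat.prime_dvd_prime_iff_eq hp Nat.prime_two).mp hd)

-- abelian-ness of anything inside R × ⊤
lemma comm_rr (i j : ZMod p) (z w : Multiplicative (ZMod p)) :
    ((r i, z) : G p) * (r j, w) = (r j, w) * (r i, z) := by
  simp [Prod.ext_iff, r_mul_r, add_comm, mul_comm]

variable (N : Subgroup (G p)) (hN : N.Normal)
  (hab : ∀ a ∈ N, ∀ b ∈ N, a * b = b * a)

include hp hodd hN hab in
lemma no_sr : ∀ x ∈ N, ∃ i z, x = ((r i, z) : G p) := by
  rintro ⟨x1, x2⟩ hx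
  cases x1 with
  | r i => exact ⟨i, x2, rfl⟩
  | sr i =>
    exfalso
    have h2 := hN.conj_mem _ hx ((r 1, 1) : G p)
    have he : ((r 1, 1) : G p) * (sr i, x2) * ((r 1, 1) : G p)⁻¹ = (sr (i - 2), x2) := by
      simp [Prod.ext_iff, r_mul_sr, sr_mul_r]
      ring
    rw [he] at h2
    have hc := hab _ hx _ h2
    simp only [Prod.mk_mul_mk, sr_mul_sr, Prod.mk.injEq] at hc
    have h1 : i - 2 - i = i - (i - 2) := r_inj hc.1
    have h4 : (4 : ZMod p) = 0 := by linear_combination -h1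
    have : ((4 : ℕ) : ZMod p) = 0 := by push_cast; exact h4
    have hd : p ∣ 4 := (ZMod.natCast_eq_zero_iff 4 p).mp this
    have : p ∣ 2 := hp.dvd_of_dvd_pow (show p ∣ 2 ^ 2 by simpa using hd)
    exact p_ne_two hp hodd ((Nat.prime_dvd_prime_iff_eq hp Nat.prime_two).mp this)

include hp hodd hN in
lemma gen_rot {i : ZMod p} {z : Multiplicative (ZMod p)} (hmem : ((r i, z) : G p) ∈ N)
    (hi : i ≠ 0) : ∀ j : ZMod p, ((r j, 1) : G p) ∈ N := by
  haveI := Fact.mk hp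
  intro j
  have h2 := hN.conj_mem _ hmem ((sr 0, 1) : G p)
  have he : ((sr 0, 1) : G p) * (r i, z) * ((sr 0, 1) : G p)⁻¹ = (r (-i), z) := by
    simp [Prod.ext_iff, sr_mul_r, sr_mul_sr]
  rw [he] at h2
  have h3 : ((r i, z) : G p) * (r (-i), z)⁻¹ ∈ N := N.mul_mem hmem (N.inv_mem h2)
  have he3 : ((r i, z) : G p) * (r (-i), z)⁻¹ = (r (i + i), 1) := by
    simp only [Prod.inv_mk, Prod.mk_mul_mk, inv_r, neg_neg, r_mul_r, mul_inv_cancel]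
  rw [he3] at h3
  set m : ZMod p := i + i with hm
  have hmne : m ≠ 0 := by
    intro h
    have : (2 : ZMod p) * i = 0 := by rw [two_mul]; exact h
    rcases mul_eq_zero.mp this with h | h
    · exact two_ne_zero' hp hodd h
    · exact hi h
  set k : ZMod p := j * m⁻¹ with hk
  have h4 : ((r m, 1) : G p) ^ k.val ∈ N := N.pow_mem h3 _
  have he4 : ((r m, 1) : G p) ^ k.val = (r j, 1) := by
    rw [Prod.pow_mk, one_pow, r_pow]
    congr 1
    rw [ZMod.natCast_rightInverse k, hk, mul_assoc, inv_mul_cancel₀ hmne, mul_one]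
  rwa [he4] at h4

include hp in
lemma gen_z {z : Multiplicative (ZMod p)} (hmem : ((1, z) : G p) ∈ N)
    (hz : z ≠ 1) : ∀ w : Multiplicative (ZMod p), ((1, w) : G p) ∈ N := by
  haveI := Fact.mk hp
  intro w
  have ha : Multiplicative.toAdd z ≠ 0 := by
    simpa using hz
  set k : ZMod p := Multiplicative.toAdd w * (Multiplicative.toAdd z)⁻¹ with hk
  have h4 : ((1, z) : G p) ^ k.val ∈ N := N.pow_mem hmem _
  have he4 : ((1, z) : G p) ^ k.val = (1, w) := by
    rw [Prod.pow_mk, one_pow]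
    congr 1
    apply Multiplicative.toAdd.injective
    rw [toAdd_pow, nsmul_eq_mul, ZMod.natCast_rightInverse k, hk, mul_assoc,
      inv_mul_cancel₀ ha, mul_one]
  rwa [he4] at h4

include hp hodd hN hab in
lemma classify :
    N = ⊥ ∨
    N = (rotations p).prod (⊥ : Subgroup (Multiplicative (ZMod p))) ∨
    N = (⊥ : Subgroup (DihedralGroup p)).prod (⊤ : Subgroup (Multiplicative (ZMod p))) ∨
    N = (rotations p).prod (⊤ : Subgroup (Multiplicative (ZMod p))) := by
  have key := no_sr hp hodd N hN hab
  by_cases hR : ∃ x ∈ N, x.1 ≠ 1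
  · obtain ⟨x, hx, hx1⟩ := hR
    obtain ⟨i, z, rfl⟩ := key x hx
    have hi : i ≠ 0 := by
      rintro rfl; exact hx1 (by simp)
    have SubR := gen_rot hp hodd N hN hx hi
    by_cases hZ : ∃ x ∈ N, x.2 ≠ 1
    · -- N = R × ⊤
      obtain ⟨y, hy, hy2⟩ := hZ
      obtain ⟨i', z', rfl⟩ := key y hy
      have h1z : ((1, z') : G p) ∈ N := by
        have := N.mul_mem hy (N.inv_mem (SubR i'))
        simpa [Prod.ext_iff, r_mul_r] using this
      have SubZ := gen_z hp N h1z hy2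
      refine Or.inr (Or.inr (Or.inr ?_))
      apply le_antisymm
      · intro x hx
        obtain ⟨i, z, rfl⟩ := key x hx
        exact Subgroup.mem_prod.mpr ⟨⟨i, rfl⟩, trivial⟩
      · rintro ⟨a, b⟩ hab'
        obtain ⟨⟨i, rfl⟩, -⟩ := Subgroup.mem_prod.mp hab'
        have := N.mul_mem (SubR i) (SubZ b)
        simpa [Prod.ext_iff, r_mul_r] using this
    · -- N = R × ⊥
      push_neg at hZ
      refine Or.inr (Or.inl ?_)
      apply le_antisymm
      · intro x hx
        obtain ⟨i, z, rfl⟩ := key x hx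
        exact Subgroup.mem_prod.mpr ⟨⟨i, rfl⟩, hZ _ hx⟩
      · rintro ⟨a, b⟩ hab'
        obtain ⟨⟨i, rfl⟩, hb⟩ := Subgroup.mem_prod.mp hab'
        rw [Subgroup.mem_bot] at hb
        subst hb
        exact SubR i
  · push_neg at hR
    by_cases hZ : ∃ x ∈ N, x.2 ≠ 1
    · -- N = ⊥ × ⊤
      obtain ⟨⟨a, b⟩, hy, hy2⟩ := hZ
      have ha : a = 1 := hR _ hy
      subst ha
      have SubZ := gen_z hp N hy (by simpa using hy2)
      refine Or.inr (Or.inr (Or.inl ?_))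
      apply le_antisymm
      · intro x hx
        exact Subgroup.mem_prod.mpr ⟨Subgroup.mem_bot.mpr (hR x hx), trivial⟩
      · rintro ⟨a, b⟩ hab'
        obtain ⟨ha, -⟩ := Subgroup.mem_prod.mp hab'
        rw [Subgroup.mem_bot] at ha
        subst ha
        exact SubZ b
    · push_neg at hZ
      left
      apply le_antisymm
      · intro x hx
        rw [Subgroup.mem_bot]
        exact Prod.ext (hR x hx) (hZ x hx)
      · exact bot_le

lemma comm_of_le (N : Subgroup (G p))
    (hle : N ≤ (rotations p).prod (⊤ : Subgroup (Multiplicative (ZMod p)))) :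
    ∀ a ∈ N, ∀ b ∈ N, a * b = b * a := by
  intro a ha b hb
  obtain ⟨⟨i, hi⟩, -⟩ := Subgroup.mem_prod.mp (hle ha)
  obtain ⟨⟨j, hj⟩, -⟩ := Subgroup.mem_prod.mp (hle hb)
  rw [show a = (r i, a.2) from Prod.ext hi.symm rfl,
    show b = (r j, b.2) from Prod.ext hj.symm rfl]
  exact comm_rr i j a.2 b.2

lemma card_rotations [NeZero p] : Nat.card (rotations p) = p := by
  have h : Nat.card (Set.range (r : ZMod p → DihedralGroup p)) = p := by
    rw [Nat.card_range_of_injective r_inj, Nat.card_zmod]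
  exact h

lemma card_prod' {G₁ G₂ : Type*} [Group G₁] [Group G₂] (H : Subgroup G₁) (K : Subgroup G₂) :
    Nat.card (H.prod K) = Nat.card H * Nat.card K := by
  rw [Nat.card_congr (Subgroup.prodEquiv H K).toEquiv, Nat.card_prod]

lemma card_mzmod : Nat.card (Multiplicative (ZMod p)) = p := by
  rw [Nat.card_congr Multiplicative.toAdd, Nat.card_zmod]

lemma card_RB [NeZero p] :
    Nat.card ((rotations p).prod (⊥ : Subgroup (Multiplicative (ZMod p)))) = p := by
  rw [card_prod', card_rotations, Subgroup.card_bot, mul_one]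

lemma card_BT [NeZero p] :
    Nat.card ((⊥ : Subgroup (DihedralGroup p)).prod
      (⊤ : Subgroup (Multiplicative (ZMod p)))) = p := by
  rw [card_prod', Subgroup.card_bot, Subgroup.card_top, card_mzmod, one_mul]

lemma card_RT [NeZero p] :
    Nat.card ((rotations p).prod (⊤ : Subgroup (Multiplicative (ZMod p)))) = p ^ 2 := by
  rw [card_prod', card_rotations, Subgroup.card_top, card_mzmod, sq]

lemma le_RT_RB : (rotations p).prod (⊥ : Subgroup (Multiplicative (ZMod p))) ≤
    (rotations p).prod (⊤ : Subgroup (Multiplicative (ZMod p))) :=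
  Subgroup.prod_mono le_rfl bot_le

lemma le_RT_BT : (⊥ : Subgroup (DihedralGroup p)).prod
    (⊤ : Subgroup (Multiplicative (ZMod p))) ≤
    (rotations p).prod (⊤ : Subgroup (Multiplicative (ZMod p))) :=
  Subgroup.prod_mono bot_le le_rfl

include hp hodd in
lemma count_two :
    Nat.card {N : Subgroup (G p) // N.Normal ∧ Nat.card N = p} = 2 := by
  haveI := Fact.mk hp
  haveI := rotations_normal (p := p)
  set A := (rotations p).prod (⊥ : Subgroup (Multiplicative (ZMod p))) with hA
  set B := (⊥ : Subgroup (DihedralGroup p)).prod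
    (⊤ : Subgroup (Multiplicative (ZMod p))) with hB
  have hAB : A ≠ B := by
    intro h
    have h1 : ((r 1, 1) : G p) ∈ A :=
      Subgroup.mem_prod.mpr ⟨⟨1, rfl⟩, Subgroup.mem_bot.mpr rfl⟩
    rw [h] at h1
    obtain ⟨h2, -⟩ := Subgroup.mem_prod.mp h1
    rw [Subgroup.mem_bot, one_def] at h2
    exact one_ne_zero (r_inj h2)
  have hiff : ∀ N : Subgroup (G p), (N.Normal ∧ Nat.card N = p) ↔ (N = A ∨ N = B) := by
    intro N
    constructor
    · rintro ⟨hN, hcard⟩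
      have hcomm : ∀ a ∈ N, ∀ b ∈ N, a * b = b * a := by
        haveI : IsCyclic N := isCyclic_of_prime_card hcard
        letI : CommGroup N := IsCyclic.commGroup
        intro a ha b hb
        exact congrArg Subtype.val (mul_comm (⟨a, ha⟩ : N) ⟨b, hb⟩)
      rcases classify hp hodd N hN hcomm with rfl | h | h | rfl
      · rw [Subgroup.card_bot] at hcard
        have := hp.two_le
        omega
      · exact Or.inl h
      · exact Or.inr h
      · rw [card_RT] at hcard
        have := hp.two_le
        nlinarith [hcard, sq_nonneg p]
    · rintro (rfl | rfl)
      · exact ⟨inferInstance, card_RB⟩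
      · exact ⟨inferInstance, card_BT⟩
  rw [Nat.card_congr (Equiv.subtypeEquivRight hiff)]
  rw [show {N : Subgroup (G p) // N = A ∨ N = B} = ↥({A, B} : Set (Subgroup (G p))) from rfl,
    Nat.card_coe_set_eq, Set.ncard_pair hAB]

end
end StmtAux

/-- In `G = D₂ₚ × ℤ/pℤ` (`p` an odd prime), a subgroup is
normal and abelian iff it is one of `{1}`, `R × {0}`, `{1} × ℤ/pℤ`,
`R × ℤ/pℤ`, where `R` is the rotation subgroup. In particular `G` has exactly
two normal subgroups of order `p`, and its normal abelian subgroups have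
orders `1`, `p`, `p`, `p²`. -/
theorem stmt_12 (p : ℕ) (hp : p.Prime) (hodd : Odd p) :
    (∀ N : Subgroup (DihedralGroup p × Multiplicative (ZMod p)),
      (N.Normal ∧ ∀ a ∈ N, ∀ b ∈ N, a * b = b * a) ↔
      (N = ⊥ ∨
       N = (rotations p).prod (⊥ : Subgroup (Multiplicative (ZMod p))) ∨
       N = (⊥ : Subgroup (DihedralGroup p)).prod
          (⊤ : Subgroup (Multiplicative (ZMod p))) ∨
       N = (rotations p).prod (⊤ : Subgroup (Multiplicative (ZMod p))))) ∧
    Nat.card {N : Subgroup (DihedralGroup p × Multiplicative (ZMod p)) //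
      N.Normal ∧ Nat.card N = p} = 2 ∧
    Nat.card ((⊥ : Subgroup (DihedralGroup p × Multiplicative (ZMod p)))) = 1 ∧
    Nat.card ((rotations p).prod (⊥ : Subgroup (Multiplicative (ZMod p)))) = p ∧
    Nat.card ((⊥ : Subgroup (DihedralGroup p)).prod
      (⊤ : Subgroup (Multiplicative (ZMod p)))) = p ∧
    Nat.card ((rotations p).prod (⊤ : Subgroup (Multiplicative (ZMod p)))) = p ^ 2 := by
  haveI := Fact.mk hp
  haveI := StmtAux.rotations_normal (p := p)
  refine ⟨?_, StmtAux.count_two hp hodd, Subgroup.card_bot, StmtAux.card_RB,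
    StmtAux.card_BT, StmtAux.card_RT⟩
  intro N
  constructor
  · rintro ⟨hN, hab⟩
    exact StmtAux.classify hp hodd N hN hab
  · rintro (rfl | rfl | rfl | rfl)
    · refine ⟨inferInstance, ?_⟩
      intro a ha b hb
      rw [Subgroup.mem_bot] at ha hb
      rw [ha, hb]
    · exact ⟨inferInstance, StmtAux.comm_of_le _ StmtAux.le_RT_RB⟩
    · exact ⟨inferInstance, StmtAux.comm_of_le _ StmtAux.le_RT_BT⟩
    · exact ⟨inferInstance, StmtAux.comm_of_le _ le_rfl⟩
end

section
/- Let K be a subgroup of G = D₂ₚ × ℤ/pℤ of order p which is not normal in G, and let D = D₂ₚ × {0} ≤ G. Then D ∩ K = {1} and G = D·K, i.e., every element g ∈ G can be written as g = d·κ with d ∈ D and κ ∈ K. -/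
/-- Let `K` be a non-normal subgroup of order `p` of
`G = D₂ₚ × ℤ/pℤ` and let `D = D₂ₚ × {0}`. Then `D ∩ K = {1}` and `G = D·K`,
i.e. every `g ∈ G` can be written as `g = d·κ` with `d ∈ D`, `κ ∈ K`. -/
theorem stmt_14 (p : ℕ) (hp : p.Prime) (hodd : Odd p)
    (K : Subgroup (DihedralGroup p × Multiplicative (ZMod p)))
    (hK : Nat.card K = p) (hKn : ¬ K.Normal)
    (D : Subgroup (DihedralGroup p × Multiplicative (ZMod p)))
    (hD : D = (⊤ : Subgroup (DihedralGroup p)).prod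
      (⊥ : Subgroup (Multiplicative (ZMod p)))) :
    D ⊓ K = ⊥ ∧
    ∀ g : DihedralGroup p × Multiplicative (ZMod p),
      ∃ d ∈ D, ∃ κ ∈ K, g = d * κ := by
  haveI : NeZero p := ⟨hp.ne_zero⟩
  haveI := Fact.mk hp
  -- find a generator k of K
  obtain ⟨k, hkK, hk1⟩ : ∃ k ∈ K, k ≠ 1 := by
    have : Nontrivial K := Finite.one_lt_card_iff_nontrivial.mp (by rw [hK]; exact hp.one_lt)
    obtain ⟨⟨k, hk⟩, hne⟩ := exists_ne (1 : K)
    exact ⟨k, hk, fun h => hne (Subtype.ext h)⟩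
  have hordk : orderOf k = p := by
    have h1 : orderOf (⟨k, hkK⟩ : K) ∣ Nat.card K := orderOf_dvd_natCard _
    rw [hK, Subgroup.orderOf_mk] at h1
    exact (hp.eq_one_or_self_of_dvd _ h1).resolve_left
      (fun h => hk1 (orderOf_eq_one_iff.mp h))
  have hKz : K = Subgroup.zpowers k := by
    refine (Subgroup.eq_of_le_of_card_ge (Subgroup.zpowers_le.mpr hkK) ?_).symm
    rw [hK, Nat.card_zpowers, hordk]
  have hkp : k ^ p = 1 := by
    have := pow_orderOf_eq_one k
    rwa [hordk] at this
  -- first component of k is a rotation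
  obtain ⟨a, ha⟩ : ∃ a, k.1 = DihedralGroup.r a := by
    rcases h : k.1 with a | i
    · exact ⟨a, rfl⟩
    · exfalso
      have h2 : k.1 ^ p = 1 := by
        have := congrArg Prod.fst hkp
        simpa using this
      rw [h] at h2
      have : orderOf (DihedralGroup.sr i : DihedralGroup p) ∣ p := orderOf_dvd_of_pow_eq_one h2
      rw [DihedralGroup.orderOf_sr] at this
      exact (Nat.not_even_iff_odd.mpr hodd) ((even_iff_two_dvd).mpr this)
  by_cases hy : k.2 = 1
  · -- then K is normal, contradiction
    exfalso
    apply hKn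
    rw [hKz]
    have hk' : k = (DihedralGroup.r a, 1) := Prod.ext ha hy
    constructor
    intro n hn g
    obtain ⟨t, ht⟩ := hn
    have ht' : k ^ t = n := ht
    subst ht'
    have key : g * k * g⁻¹ ∈ Subgroup.zpowers k := by
      obtain ⟨d, z⟩ := g
      rcases d with i | i
      · have hc : (DihedralGroup.r i, z) * k = k * (DihedralGroup.r i, z) := by
          rw [hk']
          refine Prod.ext ?_ ?_
          · simp [DihedralGroup.r_mul_r, add_comm]
          · simp [mul_comm]
        rw [hc, mul_inv_cancel_right]
        exact Subgroup.mem_zpowers k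
      · have hinv : k⁻¹ = (DihedralGroup.r (-a), 1) := by
          rw [hk']
          refine inv_eq_of_mul_eq_one_right (Prod.ext ?_ ?_)
          · simp [DihedralGroup.r_mul_r]
          · simp
        have hc : (DihedralGroup.sr i, z) * k = k⁻¹ * (DihedralGroup.sr i, z) := by
          rw [hinv, hk']
          refine Prod.ext ?_ ?_
          · simp [DihedralGroup.sr_mul_r, DihedralGroup.r_mul_sr, sub_neg_eq_add, add_comm]
          · simp
        rw [hc, mul_inv_cancel_right]
        exact Subgroup.inv_mem _ (Subgroup.mem_zpowers k)
    have hco : g * k ^ t * g⁻¹ = (g * k * g⁻¹) ^ t := by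
      simpa [MulAut.conj_apply] using (map_zpow (MulAut.conj g) k t).symm
    rw [hco]
    exact Subgroup.zpow_mem _ key t
  · -- k.2 ≠ 1
    have hordy : orderOf k.2 = p := by
      refine orderOf_eq_prime ?_ hy
      have := congrArg Prod.snd hkp
      simpa using this
    have hcard2 : Nat.card (Multiplicative (ZMod p)) = p := by
      simp [Nat.card_eq_fintype_card, ZMod.card]
    have ztop : Subgroup.zpowers k.2 = ⊤ :=
      Subgroup.eq_top_of_card_eq _ (by rw [Nat.card_zpowers, hordy, hcard2])
    constructor
    · rw [eq_bot_iff]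
      intro g hg
      have hgD : g ∈ D := hg.1
      have hgK : g ∈ K := hg.2
      rw [hKz] at hgK
      obtain ⟨t, ht⟩ := hgK
      have ht' : k ^ t = g := ht
      subst ht'
      rw [hD, Subgroup.mem_prod] at hgD
      have h2 : k.2 ^ t = 1 := by
        have := hgD.2
        rw [Subgroup.mem_bot] at this
        simpa using this
      have hdvd : (p : ℤ) ∣ t := by
        rw [← hordy]
        exact orderOf_dvd_iff_zpow_eq_one.mpr h2
      rw [Subgroup.mem_bot]
      rw [← hordk] at hdvd
      exact orderOf_dvd_iff_zpow_eq_one.mp hdvd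
    · intro g
      have : g.2 ∈ Subgroup.zpowers k.2 := ztop ▸ Subgroup.mem_top g.2
      obtain ⟨t, ht0⟩ := this
      have ht : k.2 ^ t = g.2 := ht0
      refine ⟨g * (k ^ t)⁻¹, ?_, k ^ t, K.zpow_mem hkK t, by simp⟩
      rw [hD, Subgroup.mem_prod]
      refine ⟨Subgroup.mem_top _, ?_⟩
      rw [Subgroup.mem_bot]
      have : (g * (k ^ t)⁻¹).2 = g.2 * (k.2 ^ t)⁻¹ := by simp
      rw [this, ← ht, mul_inv_cancel]
end

section
/- Let μ be a 2-cocycle on A = (ℤ/pℤ) × (ℤ/pℤ) with values in kˣ such that Alt(μ) is non-degenerate. Then there is a unique group automorphism ι of A such that Alt(μ)(x, ι(a)) = χ(x,a) for all x,a ∈ A; the map μ'(x,y) := μ(ι(x), ι(y))⁻¹ is a 2-cocycle; and μ' is cohomologous to μ if and only if Alt(μ) = ω or Alt(μ) = ω⁻¹. In particular, there are exactly two cohomology classes of such μ with μ' cohomologous to μ, and these two classes are inverses of each other. -/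
/-- The alternating bicharacter `Alt(μ)(x,y) = μ(x,y)·μ(y,x)⁻¹` of a 2-cochain. -/
def AltForm {A : Type*} [AddCommGroup A] {k : Type*} [Field k]
    (μ : A → A → kˣ) : A → A → kˣ :=
  fun x y => μ x y * (μ y x)⁻¹

/-- A 2-cocycle `ν` with non-degenerate `Alt(ν)` is *self-dual* (relative to
the hyperbolic form `χ`) if for the automorphism `ι` determined by
`Alt(ν)(x, ι a) = χ(x,a)` the cocycle `ν'(x,y) = ν(ι x, ι y)⁻¹` is
cohomologous to `ν`. -/
def SelfDualCocycle {A : Type*} [AddCommGroup A] {k : Type*} [Field k]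
    (χ : A → A → kˣ) (ν : A → A → kˣ) : Prop :=
  IsTwoCocycle ν ∧ (∀ x : A, (∀ y : A, AltForm ν x y = 1) → x = 0) ∧
  ∃ ι : A ≃+ A, (∀ x a : A, AltForm ν x (ι a) = χ x a) ∧
    Cohomologous (fun x y => (ν (ι x) (ι y))⁻¹) ν

namespace StmtAux

noncomputable instance unitsDivisible {k : Type*} [Field k] [IsAlgClosed k] :
    DivisibleBy (Additive kˣ) ℤ := by
  have hsurj : ∀ {n : ℤ}, n ≠ 0 → Function.Surjective (fun a : Additive kˣ => n • a) := by
    intro n hn u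
    have key : ∀ (m : ℕ), m ≠ 0 → ∀ v : kˣ, ∃ w : kˣ, w ^ m = v := by
      intro m hm v
      obtain ⟨z, hz⟩ := IsAlgClosed.exists_pow_nat_eq (v : k) (Nat.pos_of_ne_zero hm)
      have hz0 : z ≠ 0 := by
        intro h; rw [h, zero_pow hm] at hz; exact v.ne_zero hz.symm
      exact ⟨Units.mk0 z hz0, Units.ext (by rw [← hz]; simp)⟩
    rcases n.lt_or_lt_of_ne hn with h | h
    · obtain ⟨w, hw⟩ := key (-n).toNat (by omega) (u.toMul)⁻¹
      refine ⟨Additive.ofMul w, ?_⟩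
      have hw' : w ^ (-n) = (u.toMul)⁻¹ := by
        rw [← zpow_natCast w (-n).toNat, Int.toNat_of_nonneg (by omega)] at hw
        exact hw
      have h2 := congrArg (·⁻¹) hw'
      simp only [zpow_neg, inv_inv] at h2
      simpa using congrArg Additive.ofMul h2
    · obtain ⟨w, hw⟩ := key n.toNat (by omega) u.toMul
      refine ⟨Additive.ofMul w, ?_⟩
      have : w ^ n = u.toMul := by
        rw [← zpow_natCast w n.toNat, Int.toNat_of_nonneg (by omega)] at hw
        exact hw
      simpa using congrArg Additive.ofMul this
  exact divisibleByOfSMulRightSurj _ _ hsurj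

theorem symm_isCoboundary {A : Type*} [AddCommGroup A] {k : Type*} [Field k] [IsAlgClosed k]
    (σ : A → A → kˣ) (hσ : IsTwoCocycle σ) (hsym : ∀ a b, σ a b = σ b a)
    (h00 : σ 0 0 = 1) : IsCoboundary σ := by
  have h0l : ∀ a, σ 0 a = 1 := by
    intro a
    have := hσ 0 0 a
    rw [add_zero, zero_add, h00, one_mul] at this
    exact (mul_left_cancel (a := σ 0 a) (by rw [mul_one, ← this])).symm
  have h0r : ∀ a, σ a 0 = 1 := fun a => by rw [hsym, h0l]
  -- the central extension as a commutative group
  letI : CommGroup (kˣ × A) :=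
  { mul := fun x y => (x.1 * y.1 * σ x.2 y.2, x.2 + y.2)
    one := (1, 0)
    inv := fun x => ((x.1 * σ x.2 (-x.2))⁻¹, -x.2)
    mul_assoc := by
      rintro ⟨s, a⟩ ⟨t, b⟩ ⟨u, c⟩
      show ((s * t * σ a b) * u * σ (a + b) c, a + b + c)
          = (s * (t * u * σ b c) * σ a (b + c), a + (b + c))
      refine Prod.ext (Units.ext ?_) (add_assoc a b c)
      have h := congrArg Units.val (hσ a b c)
      push_cast at h ⊢
      linear_combination (s*t*u : k) * h
    one_mul := by
      rintro ⟨s, a⟩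
      show ((1 : kˣ) * s * σ 0 a, 0 + a) = (s, a)
      rw [h0l, zero_add, one_mul, mul_one]
    mul_one := by
      rintro ⟨s, a⟩
      show (s * 1 * σ a 0, a + 0) = (s, a)
      rw [h0r, add_zero, mul_one, mul_one]
    inv_mul_cancel := by
      rintro ⟨s, a⟩
      show ((s * σ a (-a))⁻¹ * s * σ (-a) a, -a + a) = (1, 0)
      refine Prod.ext (Units.ext ?_) (neg_add_cancel a)
      rw [hsym (-a) a]
      push_cast
      field_simp
    mul_comm := by
      rintro ⟨s, a⟩ ⟨t, b⟩
      show (s * t * σ a b, a + b) = (t * s * σ b a, b + a)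
      rw [hsym a b, mul_comm s t, add_comm a b] }
  -- inclusion of kˣ into the extension
  let i : Additive kˣ →+ Additive (kˣ × A) :=
    AddMonoidHom.mk' (fun s => Additive.ofMul ((s.toMul, (0 : A)) : kˣ × A)) (by
      intro s t
      have : ((s.toMul * t.toMul, (0:A)) : kˣ × A)
          = ((s.toMul, (0:A)) : kˣ × A) * ((t.toMul, (0:A)) : kˣ × A) := by
        show _ = ((s.toMul * t.toMul * σ 0 0, (0:A)+0) : kˣ × A)
        rw [h00, mul_one, add_zero]
      simp only [toMul_add, this, ofMul_mul])
  have hi : Function.Injective i := by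
    intro s t h
    have := congrArg (fun x => (Additive.toMul x).1) h
    exact this
  obtain ⟨h, hh⟩ := (Module.Baer.of_divisible (Additive kˣ)).extension_property_addMonoidHom
      i hi (AddMonoidHom.id _)
  refine ⟨fun a => (h (Additive.ofMul ((1, a) : kˣ × A))).toMul, ?_⟩
  intro a b
  have hmul : ((1, a) : kˣ × A) * ((1, b) : kˣ × A)
      = (Additive.toMul (i (Additive.ofMul (σ a b)))) * ((1, a + b) : kˣ × A) := by
    show ((1 * 1 * σ a b : kˣ), a + b) = ((σ a b * 1 * σ 0 (a+b) : kˣ), 0 + (a+b))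
    rw [h0l]
    exact Prod.ext (by simp) (zero_add _).symm
  have := congrArg (fun x => h (Additive.ofMul x)) hmul
  simp only [ofMul_mul, map_add] at this
  have hid : h (i (Additive.ofMul (σ a b))) = Additive.ofMul (σ a b) := by
    rw [← AddMonoidHom.comp_apply, hh]; rfl
  rw [ofMul_toMul, hid] at this
  have := congrArg Additive.toMul this
  simp only [toMul_add, toMul_ofMul] at this
  show σ a b = Additive.toMul (h (Additive.ofMul ((1,a) : kˣ × A))) *
      Additive.toMul (h (Additive.ofMul ((1,b) : kˣ × A))) *
      (Additive.toMul (h (Additive.ofMul ((1,a+b) : kˣ × A))))⁻¹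
  rw [this, mul_inv_cancel_right]
end StmtAux
namespace StmtAux

/-! ### Generic commutative-group juggling -/

lemma aux_shift {G : Type*} [CommGroup G] (x y z w : G) :
    x * w * (y * w) * ((z * w)⁻¹) = x * y * z⁻¹ * w := by
  rw [mul_inv]
  calc x * w * (y * w) * (z⁻¹ * w⁻¹) = x * y * z⁻¹ * w * (w * w⁻¹) := by ac_rfl
    _ = x * y * z⁻¹ * w := by rw [mul_inv_cancel, mul_one]

section CocycleBasics

variable {A : Type*} [AddCommGroup A] {k : Type*} [Field k]

lemma cocycle_inv {ν : A → A → kˣ} (hν : IsTwoCocycle ν) :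
    IsTwoCocycle (fun a b => (ν a b)⁻¹) := by
  intro a b c
  show (ν a b)⁻¹ * (ν (a+b) c)⁻¹ = (ν b c)⁻¹ * (ν a (b+c))⁻¹
  rw [← mul_inv, ← mul_inv, hν a b c]

lemma cocycle_mul_inv {μ ν : A → A → kˣ} (hμ : IsTwoCocycle μ) (hν : IsTwoCocycle ν) :
    IsTwoCocycle (fun a b => μ a b * (ν a b)⁻¹) := by
  intro a b c
  show (μ a b * (ν a b)⁻¹) * (μ (a+b) c * (ν (a+b) c)⁻¹)
      = (μ b c * (ν b c)⁻¹) * (μ a (b+c) * (ν a (b+c))⁻¹)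
  calc (μ a b * (ν a b)⁻¹) * (μ (a+b) c * (ν (a+b) c)⁻¹)
      = (μ a b * μ (a+b) c) * ((ν a b)⁻¹ * (ν (a+b) c)⁻¹) := by ac_rfl
    _ = (μ a b * μ (a+b) c) * (ν a b * ν (a+b) c)⁻¹ := by rw [mul_inv]
    _ = (μ b c * μ a (b+c)) * (ν b c * ν a (b+c))⁻¹ := by rw [hμ a b c, hν a b c]
    _ = (μ b c * μ a (b+c)) * ((ν b c)⁻¹ * (ν a (b+c))⁻¹) := by rw [mul_inv]
    _ = (μ b c * (ν b c)⁻¹) * (μ a (b+c) * (ν a (b+c))⁻¹) := by ac_rfl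

lemma cocycle_mul_const {σ : A → A → kˣ} (hσ : IsTwoCocycle σ) (c : kˣ) :
    IsTwoCocycle (fun a b => σ a b * c⁻¹) := by
  intro a b c'
  show (σ a b * c⁻¹) * (σ (a+b) c' * c⁻¹) = (σ b c' * c⁻¹) * (σ a (b+c') * c⁻¹)
  calc (σ a b * c⁻¹) * (σ (a+b) c' * c⁻¹)
      = (σ a b * σ (a+b) c') * (c⁻¹ * c⁻¹) := by ac_rfl
    _ = (σ b c' * σ a (b+c')) * (c⁻¹ * c⁻¹) := by rw [hσ a b c']
    _ = (σ b c' * c⁻¹) * (σ a (b+c') * c⁻¹) := by ac_rfl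

lemma alt_swap (μ : A → A → kˣ) (x y : A) : AltForm μ x y = (AltForm μ y x)⁻¹ := by
  show μ x y * (μ y x)⁻¹ = (μ y x * (μ x y)⁻¹)⁻¹
  rw [mul_inv, inv_inv]
  ac_rfl

lemma alt_self (μ : A → A → kˣ) (x : A) : AltForm μ x x = 1 := mul_inv_cancel _

lemma alt_add_left {μ : A → A → kˣ} (hμ : IsTwoCocycle μ) (a b c : A) :
    AltForm μ (a + b) c = AltForm μ a c * AltForm μ b c := by
  have h1 := hμ a b c
  have h2 := hμ c a b
  have h3 := hμ a c b
  rw [add_comm c b, add_comm a c] at h3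
  have key : μ (a+b) c * μ c a * μ c b * μ a b = μ c (a+b) * μ a c * μ b c * μ a b := by
    calc μ (a+b) c * μ c a * μ c b * μ a b
        = (μ a b * μ (a+b) c) * μ c a * μ c b := by ac_rfl
      _ = (μ b c * μ a (b+c)) * μ c a * μ c b := by rw [h1]
      _ = (μ a (b+c) * μ c b) * μ b c * μ c a := by ac_rfl
      _ = (μ c b * μ a (b+c)) * μ b c * μ c a := by rw [mul_comm (μ a (b+c)) (μ c b)]
      _ = (μ a c * μ (c+a) b) * μ b c * μ c a := by rw [← h3]
      _ = (μ c a * μ (c+a) b) * μ a c * μ b c := by ac_rfl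
      _ = (μ a b * μ c (a+b)) * μ a c * μ b c := by rw [h2]
      _ = μ c (a+b) * μ a c * μ b c * μ a b := by ac_rfl
  have key2 : μ (a+b) c * μ c a * μ c b = μ c (a+b) * μ a c * μ b c := mul_right_cancel key
  show μ (a+b) c * (μ c (a+b))⁻¹ = μ a c * (μ c a)⁻¹ * (μ b c * (μ c b)⁻¹)
  have hr : μ a c * (μ c a)⁻¹ * (μ b c * (μ c b)⁻¹)
      = (μ a c * μ b c) * ((μ c a) * (μ c b))⁻¹ := by
    rw [mul_inv]; ac_rfl
  rw [hr, ← div_eq_mul_inv, ← div_eq_mul_inv, div_eq_div_iff_mul_eq_mul]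
  calc μ (a+b) c * (μ c a * μ c b) = μ (a+b) c * μ c a * μ c b := by ac_rfl
    _ = μ c (a+b) * μ a c * μ b c := key2
    _ = μ a c * μ b c * μ c (a+b) := by ac_rfl

lemma alt_zero_left {μ : A → A → kˣ} (hμ : IsTwoCocycle μ) (c : A) :
    AltForm μ 0 c = 1 := by
  have h := alt_add_left hμ 0 0 c
  rw [add_zero] at h
  exact (mul_left_cancel (a := AltForm μ 0 c) (by rw [mul_one, ← h])).symm

lemma alt_zero_right {μ : A → A → kˣ} (hμ : IsTwoCocycle μ) (c : A) :
    AltForm μ c 0 = 1 := by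
  rw [alt_swap, alt_zero_left hμ, inv_one]

lemma alt_add_right {μ : A → A → kˣ} (hμ : IsTwoCocycle μ) (c a b : A) :
    AltForm μ c (a + b) = AltForm μ c a * AltForm μ c b := by
  rw [alt_swap, alt_add_left hμ, mul_inv, ← alt_swap, ← alt_swap]

lemma alt_neg_right {μ : A → A → kˣ} (hμ : IsTwoCocycle μ) (c a : A) :
    AltForm μ c (-a) = (AltForm μ c a)⁻¹ := by
  have h := alt_add_right hμ c a (-a)
  rw [add_neg_cancel, alt_zero_right hμ] at h
  exact eq_inv_of_mul_eq_one_right h.symm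

lemma alt_nsmul_left {μ : A → A → kˣ} (hμ : IsTwoCocycle μ) (n : ℕ) (a c : A) :
    AltForm μ (n • a) c = AltForm μ a c ^ n := by
  induction n with
  | zero => rw [zero_smul, pow_zero, alt_zero_left hμ]
  | succ n ih => rw [succ_nsmul, alt_add_left hμ, ih, pow_succ]

lemma alt_nsmul_right {μ : A → A → kˣ} (hμ : IsTwoCocycle μ) (n : ℕ) (c a : A) :
    AltForm μ c (n • a) = AltForm μ c a ^ n := by
  rw [alt_swap, alt_nsmul_left hμ, ← inv_pow, ← alt_swap]

lemma cohomologous_alt_eq {μ ν : A → A → kˣ} (h : Cohomologous μ ν) :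
    ∀ x y, AltForm μ x y = AltForm ν x y := by
  obtain ⟨f, hf⟩ := h
  intro x y
  have h1 := hf x y
  have h2 := hf y x
  rw [add_comm y x, mul_comm (f y) (f x)] at h2
  have h3 : μ x y * (ν x y)⁻¹ = μ y x * (ν y x)⁻¹ := h1.trans h2.symm
  rw [← div_eq_mul_inv, ← div_eq_mul_inv, div_eq_div_iff_mul_eq_mul] at h3
  show μ x y * (μ y x)⁻¹ = ν x y * (ν y x)⁻¹
  rw [← div_eq_mul_inv, ← div_eq_mul_inv, div_eq_div_iff_mul_eq_mul]
  exact h3.trans (mul_comm _ _)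

end CocycleBasics
end StmtAux
namespace StmtAux
section AltEq

variable {A : Type*} [AddCommGroup A] {k : Type*} [Field k] [IsAlgClosed k]

lemma cohomologous_of_alt_eq {μ ν : A → A → kˣ} (hμ : IsTwoCocycle μ) (hν : IsTwoCocycle ν)
    (h : ∀ x y, AltForm μ x y = AltForm ν x y) : Cohomologous μ ν := by
  have hσc : IsTwoCocycle (fun a b => μ a b * (ν a b)⁻¹) := cocycle_mul_inv hμ hν
  have hσsym : ∀ a b : A, μ a b * (ν a b)⁻¹ = μ b a * (ν b a)⁻¹ := by
    intro a b
    have h3 : μ a b * (μ b a)⁻¹ = ν a b * (ν b a)⁻¹ := h a b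
    rw [← div_eq_mul_inv, ← div_eq_mul_inv, div_eq_div_iff_mul_eq_mul] at h3
    rw [← div_eq_mul_inv, ← div_eq_mul_inv, div_eq_div_iff_mul_eq_mul]
    exact h3.trans (mul_comm _ _)
  obtain ⟨f, hf⟩ := symm_isCoboundary
      (fun a b => (μ a b * (ν a b)⁻¹) * (μ 0 0 * (ν 0 0)⁻¹)⁻¹)
      (cocycle_mul_const hσc _)
      (fun a b => by rw [hσsym a b])
      (by rw [mul_inv_cancel])
  refine ⟨fun a => f a * (μ 0 0 * (ν 0 0)⁻¹), ?_⟩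
  intro a b
  have h2 : μ a b * (ν a b)⁻¹
      = f a * f b * (f (a+b))⁻¹ * (μ 0 0 * (ν 0 0)⁻¹) := by
    have h4 := hf a b
    dsimp only at h4
    rw [← h4, inv_mul_cancel_right]
  show μ a b * (ν a b)⁻¹ = _
  rw [aux_shift]
  exact h2

end AltEq

/-! ### Character of `ZMod p` -/

section Ech

variable {k : Type*} [Field k]

noncomputable def ech (p : ℕ) (ξ : kˣ) : ZMod p → kˣ := fun u => ξ ^ u.val

variable {p : ℕ} {ξ : kˣ}

lemma xi_pow_mod (hξ1 : ξ ^ p = 1) (n : ℕ) : ξ ^ n = ξ ^ (n % p) := by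
  conv_lhs => rw [← Nat.div_add_mod n p]
  rw [pow_add, pow_mul, hξ1, one_pow, one_mul]

variable (hp : p.Prime) (hξ : IsPrimitiveRoot ξ p)
include hp hξ

lemma ech_add (u v : ZMod p) : ech p ξ (u + v) = ech p ξ u * ech p ξ v := by
  haveI : NeZero p := ⟨hp.ne_zero⟩
  show ξ ^ (u + v).val = ξ ^ u.val * ξ ^ v.val
  rw [ZMod.val_add, ← xi_pow_mod hξ.pow_eq_one, pow_add]

lemma ech_zero : ech p ξ 0 = 1 := by
  haveI : NeZero p := ⟨hp.ne_zero⟩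
  show ξ ^ (0 : ZMod p).val = 1
  rw [ZMod.val_zero, pow_zero]

lemma ech_neg (u : ZMod p) : ech p ξ (-u) = (ech p ξ u)⁻¹ := by
  have h : ech p ξ (-u) * ech p ξ u = 1 := by
    rw [← ech_add hp hξ, neg_add_cancel, ech_zero hp hξ]
  exact eq_inv_of_mul_eq_one_left h

lemma ech_pow (n : ℕ) (u : ZMod p) : ech p ξ u ^ n = ech p ξ ((n : ZMod p) * u) := by
  induction n with
  | zero => rw [pow_zero, Nat.cast_zero, zero_mul, ech_zero hp hξ]
  | succ n ih =>
    rw [pow_succ, ih, ← ech_add hp hξ]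
    congr 1
    push_cast
    ring

lemma ech_inj {u v : ZMod p} (h : ech p ξ u = ech p ξ v) : u = v := by
  haveI : NeZero p := ⟨hp.ne_zero⟩
  have h1 : ech p ξ (u - v) * ech p ξ v = ech p ξ v := by
    rw [← ech_add hp hξ, sub_add_cancel, h]
  have h2 : ech p ξ (u - v) = 1 :=
    mul_right_cancel (h1.trans (one_mul (ech p ξ v)).symm)
  have h2' : ξ ^ (u - v).val = 1 := h2
  have h3 : p ∣ (u - v).val := (hξ.pow_eq_one_iff_dvd _).mp h2'
  have h4 : (u - v).val = 0 := Nat.eq_zero_of_dvd_of_lt h3 (ZMod.val_lt _)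
  have h5 : u - v = 0 := (ZMod.val_eq_zero _).mp h4
  exact sub_eq_zero.mp h5

lemma ech_eq_one {u : ZMod p} (h : ech p ξ u = 1) : u = 0 := by
  refine ech_inj hp hξ ?_
  rw [ech_zero hp hξ, h]

end Ech
end StmtAux
namespace StmtAux
section Master

variable {k : Type*} [Field k] {p : ℕ} {ξ : kˣ}

/-- Decomposition of a vector in `(ZMod p)²` along the standard basis. -/
lemma decomp (hp : p.Prime) (x : ZMod p × ZMod p) :
    x = x.1.val • (((1 : ZMod p), (0 : ZMod p))) + x.2.val • (((0 : ZMod p), (1 : ZMod p))) := by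
  haveI : NeZero p := ⟨hp.ne_zero⟩
  refine Prod.ext ?_ ?_
  · show x.1 = x.1.val • (1 : ZMod p) + x.2.val • (0 : ZMod p)
    rw [nsmul_eq_mul, nsmul_eq_mul, mul_one, mul_zero, add_zero,
      ZMod.natCast_rightInverse x.1]
  · show x.2 = x.1.val • (0 : ZMod p) + x.2.val • (1 : ZMod p)
    rw [nsmul_eq_mul, nsmul_eq_mul, mul_one, mul_zero, zero_add,
      ZMod.natCast_rightInverse x.2]

lemma master (hp : p.Prime) (hξ : IsPrimitiveRoot ξ p)
    {μ : ZMod p × ZMod p → ZMod p × ZMod p → kˣ} (hμ : IsTwoCocycle μ) :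
    ∃ t : ZMod p, ∀ x y, AltForm μ x y = ech p ξ (t * (x.1 * y.2 - x.2 * y.1)) := by
  haveI : NeZero p := ⟨hp.ne_zero⟩
  set e1 : ZMod p × ZMod p := ((1 : ZMod p), (0 : ZMod p)) with he1
  set e2 : ZMod p × ZMod p := ((0 : ZMod p), (1 : ZMod p)) with he2
  set c : kˣ := AltForm μ e1 e2 with hc
  -- c is a p-th root of unity
  have hcp : c ^ p = 1 := by
    have h1 : (p : ℕ) • e1 = 0 := by
      refine Prod.ext ?_ ?_
      · show p • (1 : ZMod p) = 0
        rw [nsmul_eq_mul, mul_one, ZMod.natCast_self]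
      · show p • (0 : ZMod p) = 0
        rw [smul_zero]
    rw [hc, ← alt_nsmul_left hμ, h1, alt_zero_left hμ]
  -- write c as a power of ξ
  have hξk : IsPrimitiveRoot (ξ : k) p := IsPrimitiveRoot.coe_units_iff.mpr hξ
  have hck : (c : k) ^ p = 1 := by
    rw [← Units.val_pow_eq_pow_val, hcp, Units.val_one]
  obtain ⟨i, hip, hi⟩ := hξk.eq_pow_of_pow_eq_one hck
  have hiu : ξ ^ i = c := Units.ext (by exact_mod_cast hi)
  refine ⟨(i : ZMod p), ?_⟩
  have hechc : ech p ξ ((i : ZMod p)) = c := by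
    show ξ ^ ((i : ZMod p)).val = c
    rw [ZMod.val_natCast, Nat.mod_eq_of_lt hip, hiu]
  intro x y
  -- expand using bilinearity
  have hx := decomp hp x
  have hy := decomp hp y
  rw [show AltForm μ x y = AltForm μ (x.1.val • e1 + x.2.val • e2) y by rw [← hx],
    alt_add_left hμ, alt_nsmul_left hμ, alt_nsmul_left hμ,
    show AltForm μ e1 y = AltForm μ e1 (y.1.val • e1 + y.2.val • e2) by rw [← hy],
    show AltForm μ e2 y = AltForm μ e2 (y.1.val • e1 + y.2.val • e2) by rw [← hy],
    alt_add_right hμ, alt_add_right hμ, alt_nsmul_right hμ, alt_nsmul_right hμ,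
    alt_nsmul_right hμ, alt_nsmul_right hμ, alt_self, alt_self,
    show AltForm μ e2 e1 = (AltForm μ e1 e2)⁻¹ from alt_swap μ e2 e1]
  rw [← hc, one_pow, one_pow, one_mul, mul_one, ← hechc, ← ech_neg hp hξ,
    ech_pow hp hξ, ech_pow hp hξ, ech_pow hp hξ, ech_pow hp hξ, ← ech_add hp hξ]
  congr 1
  push_cast
  rw [ZMod.natCast_rightInverse x.1, ZMod.natCast_rightInverse x.2,
    ZMod.natCast_rightInverse y.1, ZMod.natCast_rightInverse y.2]
  ring

/-- The explicit automorphism `ι₀`. -/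
def iota0 (t : ZMod p) (ht : t ≠ 0) (hp : p.Prime) :
    (ZMod p × ZMod p) ≃+ (ZMod p × ZMod p) := by
  haveI : Fact p.Prime := ⟨hp⟩
  exact
  { toFun := fun a => (-(t⁻¹ * a.1), t⁻¹ * a.2)
    invFun := fun a => (-(t * a.1), t * a.2)
    left_inv := by
      intro a
      refine Prod.ext ?_ ?_
      · show -(t * -(t⁻¹ * a.1)) = a.1
        field_simp
      · show t * (t⁻¹ * a.2) = a.2
        field_simp
    right_inv := by
      intro a
      refine Prod.ext ?_ ?_
      · show -(t⁻¹ * -(t * a.1)) = a.1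
        field_simp
      · show t⁻¹ * (t * a.2) = a.2
        field_simp
    map_add' := by
      intro a b
      refine Prod.ext ?_ ?_
      · show -(t⁻¹ * (a + b).1) = -(t⁻¹ * a.1) + -(t⁻¹ * b.1)
        rw [Prod.fst_add]; ring
      · show t⁻¹ * (a + b).2 = t⁻¹ * a.2 + t⁻¹ * b.2
        rw [Prod.snd_add]; ring }

lemma iota0_apply (t : ZMod p) (ht : t ≠ 0) (hp : p.Prime) (a : ZMod p × ZMod p) :
    iota0 t ht hp a = (-(t⁻¹ * a.1), t⁻¹ * a.2) := rfl

end Master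
end StmtAux
namespace StmtAux
section Final

variable {k : Type*} [Field k] {p : ℕ} {ξ : kˣ}

lemma iota_eq {μ : ZMod p × ZMod p → ZMod p × ZMod p → kˣ} (hμ : IsTwoCocycle μ)
    (hnd : ∀ x : ZMod p × ZMod p, (∀ y, AltForm μ x y = 1) → x = 0)
    {ι ι' : (ZMod p × ZMod p) ≃+ (ZMod p × ZMod p)}
    (h : ∀ x a, AltForm μ x (ι a) = AltForm μ x (ι' a)) : ι = ι' := by
  refine AddEquiv.ext fun a => ?_
  have key : ∀ x, AltForm μ x (ι a - ι' a) = 1 := by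
    intro x
    rw [sub_eq_add_neg, alt_add_right hμ, alt_neg_right hμ, h x a, mul_inv_cancel]
  have h2 : ∀ y, AltForm μ (ι a - ι' a) y = 1 := by
    intro y
    rw [alt_swap, key y, inv_one]
  exact sub_eq_zero.mp (hnd _ h2)

lemma iota0_prop (hp : p.Prime) (hξ : IsPrimitiveRoot ξ p)
    {ν : ZMod p × ZMod p → ZMod p × ZMod p → kˣ} {t : ZMod p} (ht0 : t ≠ 0)
    (ht : ∀ x y, AltForm ν x y = ech p ξ (t * (x.1 * y.2 - x.2 * y.1))) :
    ∀ x a, AltForm ν x (iota0 t ht0 hp a) = ech p ξ (x.1 * a.2 + x.2 * a.1) := by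
  haveI : Fact p.Prime := ⟨hp⟩
  intro x a
  rw [ht, iota0_apply]
  congr 1
  show t * (x.1 * (t⁻¹ * a.2) - x.2 * -(t⁻¹ * a.1)) = x.1 * a.2 + x.2 * a.1
  have htt : t * t⁻¹ = 1 := mul_inv_cancel₀ ht0
  linear_combination (x.1 * a.2 + x.2 * a.1) * htt

lemma alt_dual (hp : p.Prime) (hξ : IsPrimitiveRoot ξ p)
    {ν : ZMod p × ZMod p → ZMod p × ZMod p → kˣ} {t : ZMod p} (ht0 : t ≠ 0)
    (ht : ∀ x y, AltForm ν x y = ech p ξ (t * (x.1 * y.2 - x.2 * y.1))) :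
    ∀ x y, AltForm (fun x y => (ν (iota0 t ht0 hp x) (iota0 t ht0 hp y))⁻¹) x y
      = ech p ξ (t⁻¹ * (x.1 * y.2 - x.2 * y.1)) := by
  haveI : Fact p.Prime := ⟨hp⟩
  intro x y
  have h1 : AltForm (fun x y => (ν (iota0 t ht0 hp x) (iota0 t ht0 hp y))⁻¹) x y
      = (AltForm ν (iota0 t ht0 hp x) (iota0 t ht0 hp y))⁻¹ := by
    show (ν _ _)⁻¹ * ((ν _ _)⁻¹)⁻¹ = (ν _ _ * (ν _ _)⁻¹)⁻¹
    rw [mul_inv, inv_inv]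
  rw [h1, ht, ← ech_neg hp hξ, iota0_apply, iota0_apply]
  congr 1
  show -(t * (-(t⁻¹ * x.1) * (t⁻¹ * y.2) - t⁻¹ * x.2 * -(t⁻¹ * y.1)))
      = t⁻¹ * (x.1 * y.2 - x.2 * y.1)
  have htt : t * t⁻¹ = 1 := mul_inv_cancel₀ ht0
  linear_combination (t⁻¹ * (x.1 * y.2 - x.2 * y.1)) * htt

lemma nd_t_ne_zero (hp : p.Prime) (hξ : IsPrimitiveRoot ξ p)
    {ν : ZMod p × ZMod p → ZMod p × ZMod p → kˣ} {t : ZMod p}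
    (hnd : ∀ x : ZMod p × ZMod p, (∀ y, AltForm ν x y = 1) → x = 0)
    (ht : ∀ x y, AltForm ν x y = ech p ξ (t * (x.1 * y.2 - x.2 * y.1))) : t ≠ 0 := by
  haveI : Fact p.Prime := ⟨hp⟩
  intro h0
  have h1 : (((1 : ZMod p), (0 : ZMod p)) : ZMod p × ZMod p) = 0 := by
    refine hnd _ fun y => ?_
    rw [ht, h0, zero_mul, ech_zero hp hξ]
  have := congrArg Prod.fst h1
  simp at this

end Final
end StmtAux

/-- For a 2-cocycle `μ` on `A = (ℤ/pℤ)²` with non-degenerate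
`Alt(μ)` there is a unique automorphism `ι` of `A` with
`Alt(μ)(x, ι a) = χ(x,a)`; the map `μ'(x,y) = μ(ι x, ι y)⁻¹` is a 2-cocycle,
and `μ'` is cohomologous to `μ` iff `Alt(μ) = ω` or `Alt(μ) = ω⁻¹`. In
particular there are exactly two cohomology classes of such `μ` with `μ'`
cohomologous to `μ`, and these two classes are inverses of each other. -/
theorem stmt_15 (p : ℕ) (hp : p.Prime) (hodd : Odd p)
    (k : Type*) [Field k] [IsAlgClosed k] [CharZero k]
    (ξ : kˣ) (hξ : IsPrimitiveRoot ξ p)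
    (χ ω : (ZMod p × ZMod p) → (ZMod p × ZMod p) → kˣ)
    (hχ : ∀ a b : ZMod p × ZMod p,
      χ a b = ξ ^ ((a.1 * b.2 + a.2 * b.1).val))
    (hω : ∀ a b : ZMod p × ZMod p,
      ω a b = ξ ^ ((a.1 * b.2 - a.2 * b.1).val))
    (μ : (ZMod p × ZMod p) → (ZMod p × ZMod p) → kˣ)
    (hμ : IsTwoCocycle μ)
    (hnd : ∀ x : ZMod p × ZMod p,
      (∀ y : ZMod p × ZMod p, AltForm μ x y = 1) → x = 0) :
    (∃! ι : (ZMod p × ZMod p) ≃+ (ZMod p × ZMod p),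
      ∀ x a : ZMod p × ZMod p, AltForm μ x (ι a) = χ x a) ∧
    (∀ ι : (ZMod p × ZMod p) ≃+ (ZMod p × ZMod p),
      (∀ x a : ZMod p × ZMod p, AltForm μ x (ι a) = χ x a) →
      IsTwoCocycle (fun x y => (μ (ι x) (ι y))⁻¹) ∧
      (Cohomologous (fun x y => (μ (ι x) (ι y))⁻¹) μ ↔
        ((∀ x y : ZMod p × ZMod p, AltForm μ x y = ω x y) ∨
         (∀ x y : ZMod p × ZMod p, AltForm μ x y = (ω x y)⁻¹)))) ∧
    (∃ μ₁ μ₂ : (ZMod p × ZMod p) → (ZMod p × ZMod p) → kˣ,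
      SelfDualCocycle χ μ₁ ∧ SelfDualCocycle χ μ₂ ∧
      ¬ Cohomologous μ₁ μ₂ ∧
      Cohomologous μ₂ (fun x y => (μ₁ x y)⁻¹) ∧
      ∀ ν : (ZMod p × ZMod p) → (ZMod p × ZMod p) → kˣ,
        SelfDualCocycle χ ν → (Cohomologous ν μ₁ ∨ Cohomologous ν μ₂)) := by
  haveI hpf : Fact p.Prime := ⟨hp⟩
  haveI : NeZero p := ⟨hp.ne_zero⟩
  obtain ⟨t, ht⟩ := StmtAux.master hp hξ hμ
  have ht0 : t ≠ 0 := StmtAux.nd_t_ne_zero hp hξ hnd ht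
  have hχe : ∀ x a : ZMod p × ZMod p,
      χ x a = StmtAux.ech p ξ (x.1 * a.2 + x.2 * a.1) := fun x a => hχ x a
  have hωe : ∀ x y : ZMod p × ZMod p,
      ω x y = StmtAux.ech p ξ (x.1 * y.2 - x.2 * y.1) := fun x y => hω x y
  have hι₀ : ∀ x a, AltForm μ x (StmtAux.iota0 t ht0 hp a) = χ x a := by
    intro x a
    rw [StmtAux.iota0_prop hp hξ ht0 ht x a, hχe]
  have huniq : ∀ ι : (ZMod p × ZMod p) ≃+ (ZMod p × ZMod p),
      (∀ x a, AltForm μ x (ι a) = χ x a) → ι = StmtAux.iota0 t ht0 hp := by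
    intro ι hι
    exact StmtAux.iota_eq hμ hnd (fun x a => by rw [hι x a, hι₀ x a])
  -- names for the distinguished cocycles
  refine ⟨⟨StmtAux.iota0 t ht0 hp, hι₀, huniq⟩, ?_, ?_⟩
  · -- PART 2
    intro ι hι
    have hieq := huniq ι hι
    subst hieq
    have hμ'c : IsTwoCocycle
        (fun x y => (μ (StmtAux.iota0 t ht0 hp x) (StmtAux.iota0 t ht0 hp y))⁻¹) := by
      intro a b c
      show (μ _ _)⁻¹ * (μ (StmtAux.iota0 t ht0 hp (a + b)) _)⁻¹
          = (μ _ _)⁻¹ * (μ _ (StmtAux.iota0 t ht0 hp (b + c)))⁻¹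
      rw [map_add, map_add, ← mul_inv, ← mul_inv,
        hμ (StmtAux.iota0 t ht0 hp a) (StmtAux.iota0 t ht0 hp b) (StmtAux.iota0 t ht0 hp c)]
    refine ⟨hμ'c, ?_, ?_⟩
    · -- Cohomologous → ω or ω⁻¹
      intro hcoh
      have heq := StmtAux.cohomologous_alt_eq hcoh
        (((1 : ZMod p), (0 : ZMod p))) (((0 : ZMod p), (1 : ZMod p)))
      rw [StmtAux.alt_dual hp hξ ht0 ht, ht] at heq
      have heq2 := StmtAux.ech_inj hp hξ heq
      norm_num at heq2
      -- heq2 : t⁻¹ = t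
      have hss : t * t = 1 := by
        have h3 : t * t⁻¹ = 1 := mul_inv_cancel₀ ht0
        rw [heq2] at h3
        exact h3
      have hsq : (t - 1) * (t + 1) = 0 := by linear_combination hss
      rcases mul_eq_zero.mp hsq with h | h
      · left
        have ht1 : t = 1 := by linear_combination h
        intro x y
        rw [ht, hωe, ht1, one_mul]
      · right
        have ht1 : t = -1 := by linear_combination h
        intro x y
        rw [ht, hωe, ht1, ← StmtAux.ech_neg hp hξ]
        congr 1
        ring
    · -- ω or ω⁻¹ → Cohomologous
      intro hor
      have htinv : t⁻¹ = t := by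
        rcases hor with h | h
        · have h1 := (ht _ _).symm.trans
            ((h ((1 : ZMod p), (0 : ZMod p)) ((0 : ZMod p), (1 : ZMod p))).trans
              (hωe _ _))
          have h2 := StmtAux.ech_inj hp hξ h1
          norm_num at h2
          rw [h2, inv_one]
        · have h1 := (ht _ _).symm.trans
            ((h ((1 : ZMod p), (0 : ZMod p)) ((0 : ZMod p), (1 : ZMod p))).trans
              (congrArg (·⁻¹) (hωe _ _)))
          have h2 : StmtAux.ech p ξ (t * ((1 : ZMod p) * 1 - 0 * 0))
              = StmtAux.ech p ξ (-((1 : ZMod p) * 1 - 0 * 0)) := by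
            rw [h1, StmtAux.ech_neg hp hξ]
          have h3 := StmtAux.ech_inj hp hξ h2
          norm_num at h3
          rw [h3, inv_neg_one]
      apply StmtAux.cohomologous_of_alt_eq hμ'c hμ
      intro x y
      rw [StmtAux.alt_dual hp hξ ht0 ht, ht, htinv]
  · -- PART 3
    have hμ₁c : IsTwoCocycle
        (fun x y : ZMod p × ZMod p => StmtAux.ech p ξ (x.1 * y.2)) := by
      intro a b c
      show StmtAux.ech p ξ (a.1 * b.2) * StmtAux.ech p ξ ((a + b).1 * c.2)
          = StmtAux.ech p ξ (b.1 * c.2) * StmtAux.ech p ξ (a.1 * (b + c).2)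
      rw [← StmtAux.ech_add hp hξ, ← StmtAux.ech_add hp hξ]
      congr 1
      rw [Prod.fst_add, Prod.snd_add]
      ring
    have hμ₂c : IsTwoCocycle
        (fun x y : ZMod p × ZMod p => (StmtAux.ech p ξ (x.1 * y.2))⁻¹) :=
      StmtAux.cocycle_inv hμ₁c
    have halt₁ : ∀ x y : ZMod p × ZMod p,
        AltForm (fun x y : ZMod p × ZMod p => StmtAux.ech p ξ (x.1 * y.2)) x y
          = StmtAux.ech p ξ ((1 : ZMod p) * (x.1 * y.2 - x.2 * y.1)) := by
      intro x y
      show StmtAux.ech p ξ (x.1 * y.2) * (StmtAux.ech p ξ (y.1 * x.2))⁻¹ = _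
      rw [← StmtAux.ech_neg hp hξ, ← StmtAux.ech_add hp hξ]
      congr 1
      ring
    have halt₂ : ∀ x y : ZMod p × ZMod p,
        AltForm (fun x y : ZMod p × ZMod p => (StmtAux.ech p ξ (x.1 * y.2))⁻¹) x y
          = StmtAux.ech p ξ ((-1 : ZMod p) * (x.1 * y.2 - x.2 * y.1)) := by
      intro x y
      show (StmtAux.ech p ξ (x.1 * y.2))⁻¹ * ((StmtAux.ech p ξ (y.1 * x.2))⁻¹)⁻¹ = _
      rw [inv_inv, ← StmtAux.ech_neg hp hξ, ← StmtAux.ech_add hp hξ]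
      congr 1
      ring
    have hone : ((1 : ZMod p)) ≠ 0 := one_ne_zero
    have hnegone : ((-1 : ZMod p)) ≠ 0 := by
      simp
    have hnd₁ : ∀ x : ZMod p × ZMod p,
        (∀ y, AltForm (fun x y : ZMod p × ZMod p => StmtAux.ech p ξ (x.1 * y.2)) x y = 1)
        → x = 0 := by
      intro x hx
      have h1 : x.1 = 0 := by
        have h := hx ((0 : ZMod p), (1 : ZMod p))
        rw [halt₁] at h
        have := StmtAux.ech_eq_one hp hξ h
        simpa using this
      have h2 : x.2 = 0 := by
        have h := hx ((1 : ZMod p), (0 : ZMod p))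
        rw [halt₁] at h
        have := StmtAux.ech_eq_one hp hξ h
        simpa using this
      rw [Prod.ext_iff]
      exact ⟨h1, h2⟩
    have hnd₂ : ∀ x : ZMod p × ZMod p,
        (∀ y, AltForm (fun x y : ZMod p × ZMod p => (StmtAux.ech p ξ (x.1 * y.2))⁻¹) x y = 1)
        → x = 0 := by
      intro x hx
      refine hnd₁ x fun y => ?_
      have h := hx y
      rw [halt₂] at h
      rw [halt₁]
      have := StmtAux.ech_eq_one hp hξ h
      rw [show ((1 : ZMod p)) * (x.1 * y.2 - x.2 * y.1)
          = -((-1 : ZMod p) * (x.1 * y.2 - x.2 * y.1)) by ring, this, neg_zero,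
        StmtAux.ech_zero hp hξ]
    refine ⟨fun x y : ZMod p × ZMod p => StmtAux.ech p ξ (x.1 * y.2),
      fun x y : ZMod p × ZMod p => (StmtAux.ech p ξ (x.1 * y.2))⁻¹,
      ⟨hμ₁c, hnd₁, StmtAux.iota0 1 hone hp, ?_, ?_⟩,
      ⟨hμ₂c, hnd₂, StmtAux.iota0 (-1) hnegone hp, ?_, ?_⟩, ?_, ?_, ?_⟩
    · intro x a
      rw [StmtAux.iota0_prop hp hξ hone halt₁ x a, hχe]
    · refine ⟨fun _ => 1, fun a b => ?_⟩
      have hval : (StmtAux.ech p ξ ((StmtAux.iota0 1 hone hp a).1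
            * (StmtAux.iota0 1 hone hp b).2))⁻¹
          = StmtAux.ech p ξ (a.1 * b.2) := by
        rw [← StmtAux.ech_neg hp hξ, StmtAux.iota0_apply, StmtAux.iota0_apply]
        congr 1
        show -(-((1 : ZMod p)⁻¹ * a.1) * ((1 : ZMod p)⁻¹ * b.2)) = a.1 * b.2
        rw [inv_one]
        ring
      show (StmtAux.ech p ξ ((StmtAux.iota0 1 hone hp a).1
            * (StmtAux.iota0 1 hone hp b).2))⁻¹
          * (StmtAux.ech p ξ (a.1 * b.2))⁻¹ = (1 : kˣ) * 1 * 1⁻¹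
      rw [hval, mul_inv_cancel, inv_one, mul_one, mul_one]
    · intro x a
      rw [StmtAux.iota0_prop hp hξ hnegone halt₂ x a, hχe]
    · refine ⟨fun _ => 1, fun a b => ?_⟩
      have hval : ((StmtAux.ech p ξ ((StmtAux.iota0 (-1) hnegone hp a).1
            * (StmtAux.iota0 (-1) hnegone hp b).2))⁻¹)⁻¹
          = (StmtAux.ech p ξ (a.1 * b.2))⁻¹ := by
        rw [inv_inv, ← StmtAux.ech_neg hp hξ, StmtAux.iota0_apply, StmtAux.iota0_apply]
        congr 1
        show -((-1 : ZMod p)⁻¹ * a.1) * ((-1 : ZMod p)⁻¹ * b.2) = -(a.1 * b.2)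
        rw [inv_neg_one]
        ring
      show ((StmtAux.ech p ξ ((StmtAux.iota0 (-1) hnegone hp a).1
            * (StmtAux.iota0 (-1) hnegone hp b).2))⁻¹)⁻¹
          * ((StmtAux.ech p ξ (a.1 * b.2))⁻¹)⁻¹ = (1 : kˣ) * 1 * 1⁻¹
      rw [hval, mul_inv_cancel, inv_one, mul_one, mul_one]
    · -- not cohomologous
      intro hcoh
      have heq := StmtAux.cohomologous_alt_eq hcoh
        (((1 : ZMod p), (0 : ZMod p))) (((0 : ZMod p), (1 : ZMod p)))
      rw [halt₁, halt₂] at heq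
      have h2 := StmtAux.ech_inj hp hξ heq
      norm_num at h2
      -- h2 : (1 : ZMod p) = -1
      have h3 : ((2 : ℕ) : ZMod p) = 0 := by push_cast; linear_combination h2
      have hdvd : p ∣ 2 := (ZMod.natCast_eq_zero_iff 2 p).mp h3
      have hp2 : p = 2 := (Nat.prime_dvd_prime_iff_eq hp Nat.prime_two).mp hdvd
      rw [hp2] at hodd
      exact absurd hodd (by decide)
    · -- μ₂ cohomologous to μ₁⁻¹ (they are equal)
      refine ⟨fun _ => 1, fun a b => ?_⟩
      show (StmtAux.ech p ξ (a.1 * b.2))⁻¹ * ((StmtAux.ech p ξ (a.1 * b.2))⁻¹)⁻¹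
          = (1 : kˣ) * 1 * 1⁻¹
      rw [mul_inv_cancel, inv_one, mul_one, mul_one]
    · -- classification
      intro ν hν
      obtain ⟨hνc, hνnd, ι, hιp, hcoh⟩ := hν
      obtain ⟨s, hs⟩ := StmtAux.master hp hξ hνc
      have hs0 : s ≠ 0 := StmtAux.nd_t_ne_zero hp hξ hνnd hs
      have hιeq : ι = StmtAux.iota0 s hs0 hp := by
        refine StmtAux.iota_eq hνc hνnd fun x a => ?_
        rw [hιp x a, hχe, StmtAux.iota0_prop hp hξ hs0 hs x a]
      subst hιeq
      have heq := StmtAux.cohomologous_alt_eq hcoh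
        (((1 : ZMod p), (0 : ZMod p))) (((0 : ZMod p), (1 : ZMod p)))
      rw [StmtAux.alt_dual hp hξ hs0 hs, hs] at heq
      have heq2 := StmtAux.ech_inj hp hξ heq
      norm_num at heq2
      have hss : s * s = 1 := by
        have h3 : s * s⁻¹ = 1 := mul_inv_cancel₀ hs0
        rw [heq2] at h3
        exact h3
      have hsq : (s - 1) * (s + 1) = 0 := by linear_combination hss
      rcases mul_eq_zero.mp hsq with h | h
      · left
        apply StmtAux.cohomologous_of_alt_eq hνc hμ₁c
        intro x y
        rw [hs, halt₁]
        congr 1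
        have hs1 : s = 1 := by linear_combination h
        rw [hs1]
      · right
        apply StmtAux.cohomologous_of_alt_eq hνc hμ₂c
        intro x y
        rw [hs, halt₂]
        congr 1
        have hs1 : s = -1 := by linear_combination h
        rw [hs1]
end
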